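/- arXiv:2104.01990 — 4 statements merged into one kernel-verified Lean document; each statement's English description precedes it below -/
import Mathlib

section
/- Let 𝕃 = {(s,λ) ∈ ℂ × ℂ : Re λ > 0 and λ(j − s) ≠ (2k+1)πi for all integers j ≥ 1 and all k ∈ ℤ}. For j ≥ 1 set q_j(s,λ,z) = e^z / (e^{λ(j−s)} + 1), and let Φ_n(s,λ) = q_1(s,λ, q_2(s,λ, …, q_n(s,λ, 0)…)) be the n-fold nested composition evaluated at z = 0. Then there exists a function β : ℂ × ℂ → ℂ, holomorphic on 𝕃 (complex differentiable in each of the variables s and λ at every point of 𝕃), such that Φ_n converges to β uniformly on every compact subset of 𝕃 as n → ∞. -/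
open Complex Filter Topology
open scoped ENNReal NNReal

/-- The set 𝕃 of pairs (s, λ) with Re λ > 0 and λ(j − s) ≠ (2k+1)πi
for all integers j ≥ 1 and all k ∈ ℤ. -/
def Lset : Set (ℂ × ℂ) :=
  {p | 0 < p.2.re ∧ ∀ j : ℕ, 1 ≤ j → ∀ k : ℤ,
    p.2 * ((j : ℂ) - p.1) ≠ (2 * (k : ℂ) + 1) * (Real.pi : ℂ) * Complex.I}

/-- `qnest s lam j k` is the nested composition `q_j(s,λ, q_{j+1}(s,λ, …, q_{j+k-1}(s,λ,0)…))`
where `q_j(s,λ,z) = e^z / (e^{λ(j−s)} + 1)`. -/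
noncomputable def qnest (s lam : ℂ) : ℕ → ℕ → ℂ
  | _, 0 => 0
  | j, k + 1 => Complex.exp (qnest s lam (j + 1) k) /
      (Complex.exp (lam * ((j : ℂ) - s)) + 1)

/-- `Phi n s lam = q_1(s,λ, q_2(s,λ, …, q_n(s,λ, 0)…))`. -/
noncomputable def Phi (n : ℕ) (s lam : ℂ) : ℂ := qnest s lam 1 n

/-! ### Auxiliary lemmas -/

lemma qnest_zero (s lam : ℂ) (j : ℕ) : qnest s lam j 0 = 0 := by rw [qnest]

lemma qnest_succ (s lam : ℂ) (j k : ℕ) : qnest s lam j (k+1) =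
    Complex.exp (qnest s lam (j + 1) k) / (Complex.exp (lam * ((j : ℂ) - s)) + 1) := by
  rw [qnest]

lemma Phi_def (n : ℕ) (s lam : ℂ) : Phi n s lam = qnest s lam 1 n := rfl

lemma exp_eq_neg_one_iff' {z : ℂ} :
    Complex.exp z = -1 ↔ ∃ k : ℤ, z = (2*(k:ℂ)+1) * (Real.pi:ℂ) * Complex.I := by
  rw [show (-1 : ℂ) = Complex.exp ((Real.pi:ℂ) * Complex.I) from Complex.exp_pi_mul_I.symm,
    Complex.exp_eq_exp_iff_exists_int]
  constructor
  · rintro ⟨n, hn⟩; exact ⟨n, by rw [hn]; ring⟩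
  · rintro ⟨n, hn⟩; exact ⟨n, by rw [hn]; ring⟩

lemma mem_Lset_iff {p : ℂ × ℂ} : p ∈ Lset ↔ 0 < p.2.re ∧
    ∀ j : ℕ, 1 ≤ j → Complex.exp (p.2 * ((j:ℂ) - p.1)) ≠ -1 := by
  unfold Lset
  simp only [Set.mem_setOf_eq]
  constructor
  · rintro ⟨h1, h2⟩
    refine ⟨h1, fun j hj hexp => ?_⟩
    obtain ⟨k, hk⟩ := exp_eq_neg_one_iff'.1 hexp
    exact h2 j hj k hk
  · rintro ⟨h1, h2⟩
    exact ⟨h1, fun j hj k hk => h2 j hj (exp_eq_neg_one_iff'.2 ⟨k, hk⟩)⟩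

lemma denom_ne_zero {p : ℂ × ℂ} (hp : p ∈ Lset) {j : ℕ} (hj : 1 ≤ j) :
    Complex.exp (p.2 * ((j:ℂ) - p.1)) + 1 ≠ 0 := by
  intro h
  exact (mem_Lset_iff.1 hp).2 j hj (eq_neg_of_add_eq_zero_left h)

lemma norm_exp_eq (w : ℂ) : ‖Complex.exp w‖ = Real.exp w.re := by
  rw [Complex.norm_exp]

lemma norm_exp_le' {x : ℂ} {B : ℝ} (hx : ‖x‖ ≤ B) : ‖Complex.exp x‖ ≤ Real.exp B := by
  rw [norm_exp_eq]
  exact Real.exp_le_exp.2 (((Complex.abs_re_le_norm x).trans' (le_abs_self _)).trans hx)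

lemma exp_lip {u v : ℂ} {B : ℝ} (hu : ‖u‖ ≤ B) (hv : ‖v‖ ≤ B) :
    ‖Complex.exp u - Complex.exp v‖ ≤ Real.exp B * ‖u - v‖ := by
  refine Convex.norm_image_sub_le_of_norm_deriv_le (𝕜 := ℂ) (f := Complex.exp)
    (s := Metric.closedBall (0:ℂ) B) (C := Real.exp B)
    (fun x _ => Complex.differentiable_exp x)
    (fun x hx => by rw [Complex.deriv_exp]; exact norm_exp_le' (by simpa using hx))
    (convex_closedBall _ _) (by simpa using hv) (by simpa using hu)

lemma re_formula (s lam : ℂ) (j : ℕ) :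
    (lam * ((j:ℂ) - s)).re = (j:ℝ) * lam.re - (lam * s).re := by
  have h : lam * ((j:ℂ) - s) = (j:ℂ) * lam - lam * s := by ring
  rw [h, Complex.sub_re]
  simp [Complex.mul_re]

lemma norm_denom_lower (w : ℂ) : Real.exp w.re - 1 ≤ ‖Complex.exp w + 1‖ := by
  have h : ‖Complex.exp w‖ ≤ ‖Complex.exp w + 1‖ + ‖(-1 : ℂ)‖ := by
    have := norm_add_le (Complex.exp w + 1) (-1)
    simpa using this
  rw [norm_exp_eq] at h
  simp only [norm_neg, norm_one] at h
  linarith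

lemma qnest_diff_s (lam : ℂ) : ∀ (k j : ℕ) (s : ℂ),
    (∀ i : ℕ, 1 ≤ i → Complex.exp (lam * ((i:ℂ) - s)) + 1 ≠ 0) → 1 ≤ j →
    DifferentiableAt ℂ (fun z => qnest z lam j k) s := by
  intro k
  induction k with
  | zero =>
    intro j s h hj
    simp only [qnest_zero]
    exact differentiableAt_const 0
  | succ k ih =>
    intro j s h hj
    simp only [qnest_succ]
    refine DifferentiableAt.div ?_ ?_ (h j hj)
    · exact (ih (j+1) s h (by omega)).cexp
    · exact ((((differentiableAt_const ((j:ℂ))).sub differentiableAt_id).const_mul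
        lam).cexp).add (differentiableAt_const 1)

lemma qnest_diff_lam (s : ℂ) : ∀ (k j : ℕ) (lam : ℂ),
    (∀ i : ℕ, 1 ≤ i → Complex.exp (lam * ((i:ℂ) - s)) + 1 ≠ 0) → 1 ≤ j →
    DifferentiableAt ℂ (fun l => qnest s l j k) lam := by
  intro k
  induction k with
  | zero =>
    intro j lam h hj
    simp only [qnest_zero]
    exact differentiableAt_const 0
  | succ k ih =>
    intro j lam h hj
    simp only [qnest_succ]
    refine DifferentiableAt.div ?_ ?_ (h j hj)
    · exact (ih (j+1) lam h (by omega)).cexp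
    · exact ((differentiableAt_id.mul_const ((j:ℂ) - s)).cexp).add (differentiableAt_const 1)

lemma isOpen_Lset : IsOpen Lset := by
  rw [isOpen_iff_mem_nhds]
  intro p hp
  have hpL := mem_Lset_iff.1 hp
  obtain ⟨h1, h2⟩ := hpL
  obtain ⟨N, hN⟩ := exists_nat_gt ((‖p.2‖+1) * (‖p.1‖+1) / (p.2.re/2))
  have ha2 : 0 < p.2.re / 2 := by linarith
  set V : Set (ℂ × ℂ) :=
    ({q : ℂ × ℂ | p.2.re/2 < q.2.re} ∩ {q : ℂ × ℂ | ‖q.2 * q.1‖ < (‖p.2‖+1)*(‖p.1‖+1)}) ∩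
    ⋂ j ∈ Finset.Icc 1 N, {q : ℂ × ℂ | Complex.exp (q.2 * ((j:ℂ) - q.1)) ≠ -1} with hV
  have hVopen : IsOpen V := by
    refine IsOpen.inter (IsOpen.inter ?_ ?_) ?_
    · exact isOpen_lt continuous_const (Complex.continuous_re.comp continuous_snd)
    · exact isOpen_lt (continuous_snd.mul continuous_fst).norm continuous_const
    · refine isOpen_biInter_finset fun j _ => ?_
      exact isOpen_ne.preimage ((continuous_snd.mul (continuous_const.sub continuous_fst)).cexp)
  have hpV : p ∈ V := by
    refine ⟨⟨by simpa using by linarith, ?_⟩, ?_⟩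
    · have := norm_mul_le p.2 p.1
      have h01 := norm_nonneg p.1
      have h02 := norm_nonneg p.2
      simp only [Set.mem_setOf_eq]
      nlinarith
    · simp only [Set.mem_iInter, Set.mem_setOf_eq]
      intro j hj
      exact h2 j (Finset.mem_Icc.1 hj).1
  refine Filter.mem_of_superset (hVopen.mem_nhds hpV) ?_
  rintro q ⟨⟨hq1, hq2⟩, hq3⟩
  simp only [Set.mem_setOf_eq] at hq1 hq2
  rw [mem_Lset_iff]
  refine ⟨by linarith, fun j hj => ?_⟩
  rcases le_or_gt j N with hjN | hjN
  · simp only [Set.mem_iInter, Set.mem_setOf_eq] at hq3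
    exact hq3 j (Finset.mem_Icc.2 ⟨hj, hjN⟩)
  · intro heq
    have hre : 0 < (q.2 * ((j:ℂ) - q.1)).re := by
      rw [re_formula]
      have hj1 : (N:ℝ) < (j:ℝ) := by exact_mod_cast hjN
      have hq2re : (q.2 * q.1).re ≤ ‖q.2 * q.1‖ := by
        have := Complex.abs_re_le_norm (q.2 * q.1)
        exact (le_abs_self _).trans this
      have hNb : (‖p.2‖+1) * (‖p.1‖+1) < (N:ℝ) * (p.2.re/2) := by
        rw [div_lt_iff₀ ha2] at hN
        linarith
      have hjmul : (j:ℝ) * (p.2.re/2) ≤ (j:ℝ) * q.2.re :=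
        mul_le_mul_of_nonneg_left (le_of_lt hq1) (Nat.cast_nonneg j)
      have hNj : (N:ℝ) * (p.2.re/2) ≤ (j:ℝ) * (p.2.re/2) :=
        mul_le_mul_of_nonneg_right (le_of_lt hj1) (le_of_lt ha2)
      nlinarith
    have hnorm : ‖Complex.exp (q.2 * ((j:ℂ) - q.1))‖ = 1 := by rw [heq]; simp
    rw [norm_exp_eq] at hnorm
    have := (Real.exp_eq_one_iff _).1 hnorm
    linarith

lemma key_cauchy (U : Set (ℂ × ℂ)) (hU : IsCompact U) (hUL : U ⊆ Lset) :
    UniformCauchySeqOn (fun n (p : ℂ × ℂ) => Phi n p.1 p.2) atTop U := by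
  rcases U.eq_empty_or_nonempty with rfl | hne
  · exact fun u hu => Filter.Eventually.of_forall (fun _ x hx => absurd hx (Set.notMem_empty x))
  -- minimum of Re λ on U
  obtain ⟨p₀, hp₀U, hp₀min'⟩ := hU.exists_isMinOn hne
    ((Complex.continuous_re.comp continuous_snd).continuousOn)
  have hp₀min := isMinOn_iff.1 hp₀min'
  set a : ℝ := p₀.2.re with ha
  have ha0 : 0 < a := (hUL hp₀U).1
  have hale : ∀ p ∈ U, a ≤ p.2.re := hp₀min
  -- maximum of ‖λ s‖ on U
  obtain ⟨p₁, hp₁U, hp₁max'⟩ := hU.exists_isMaxOn hne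
    ((continuous_snd.mul continuous_fst).norm.continuousOn)
  have hp₁max := isMaxOn_iff.1 hp₁max'
  set C : ℝ := ‖p₁.2 * p₁.1‖ with hCdef
  have hC0 : 0 ≤ C := norm_nonneg _
  have hCle : ∀ p ∈ U, ‖p.2 * p.1‖ ≤ C := hp₁max
  -- real part estimate
  have hre : ∀ p ∈ U, ∀ j : ℕ, (j:ℝ) * a - C ≤ (p.2 * ((j:ℂ) - p.1)).re := by
    intro p hp j
    rw [re_formula]
    have h1 : (j:ℝ) * a ≤ (j:ℝ) * p.2.re :=
      mul_le_mul_of_nonneg_left (hale p hp) (Nat.cast_nonneg j)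
    have h2 : (p.2 * p.1).re ≤ C := by
      have h3 := Complex.abs_re_le_norm (p.2 * p.1)
      exact ((le_abs_self _).trans h3).trans (hCle p hp)
    linarith
  have hdlow : ∀ p ∈ U, ∀ j : ℕ,
      Real.exp ((j:ℝ)*a - C) - 1 ≤ ‖Complex.exp (p.2 * ((j:ℂ) - p.1)) + 1‖ := by
    intro p hp j
    have h1 := Real.exp_le_exp.2 (hre p hp j)
    have h2 := norm_denom_lower (p.2 * ((j:ℂ) - p.1))
    linarith
  -- choose J
  obtain ⟨J, hJgt⟩ := exists_nat_gt ((C + 2)/a)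
  have hJa : ∀ j : ℕ, J ≤ j → 2 ≤ (j:ℝ)*a - C := by
    intro j hj
    have h1 : (J:ℝ) ≤ (j:ℝ) := Nat.cast_le.2 hj
    rw [div_lt_iff₀ ha0] at hJgt
    nlinarith
  -- numeric facts
  have he1 : (2:ℝ) ≤ Real.exp 1 := by have := Real.add_one_le_exp 1; linarith
  have he2 : Real.exp 2 = Real.exp 1 * Real.exp 1 := by rw [← Real.exp_add]; norm_num
  have he3 : Real.exp 1 + 1 ≤ Real.exp 2 := by nlinarith [Real.exp_pos 1]
  have he4 : (4:ℝ) ≤ Real.exp 2 := by nlinarith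
  -- tail bound: for j ≥ J all nested values are ≤ 1
  have htail : ∀ k : ℕ, ∀ p ∈ U, ∀ j : ℕ, J ≤ j → ‖qnest p.1 p.2 j k‖ ≤ 1 := by
    intro k
    induction k with
    | zero => intro p hp j hj; simp [qnest_zero]
    | succ k ih =>
      intro p hp j hj
      rw [qnest_succ, norm_div]
      have hnum : ‖Complex.exp (qnest p.1 p.2 (j+1) k)‖ ≤ Real.exp 1 :=
        norm_exp_le' (ih p hp (j+1) (by omega))
      have hden : Real.exp 1 ≤ ‖Complex.exp (p.2 * ((j:ℂ) - p.1)) + 1‖ := by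
        have h1 := hdlow p hp j
        have h2 := Real.exp_le_exp.2 (hJa j hj)
        linarith
      have hdpos : (0:ℝ) < ‖Complex.exp (p.2 * ((j:ℂ) - p.1)) + 1‖ :=
        lt_of_lt_of_le (Real.exp_pos 1) hden
      rw [div_le_one hdpos]
      exact hnum.trans hden
  -- lower bound for denominators with small index
  have hcsmall : ∀ m : ℕ, ∃ c : ℝ, 0 < c ∧ ∀ j : ℕ, 1 ≤ j → j ≤ m → ∀ p ∈ U,
      c ≤ ‖Complex.exp (p.2 * ((j:ℂ) - p.1)) + 1‖ := by
    intro m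
    induction m with
    | zero => exact ⟨1, one_pos, fun j hj1 hj0 => absurd (hj1.trans hj0) (by norm_num)⟩
    | succ m ih =>
      obtain ⟨c, hc, hcb⟩ := ih
      obtain ⟨q, hqU, hqmin'⟩ := hU.exists_isMinOn hne
        (((continuous_snd.mul (continuous_const.sub continuous_fst)).cexp.add
          continuous_const).norm.continuousOn
          (f := fun p : ℂ × ℂ => ‖Complex.exp (p.2 * (((m+1 : ℕ):ℂ) - p.1)) + 1‖))
      have hqmin := isMinOn_iff.1 hqmin'
      have hq0 : 0 < ‖Complex.exp (q.2 * (((m+1 : ℕ):ℂ) - q.1)) + 1‖ :=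
        norm_pos_iff.2 (denom_ne_zero (hUL hqU) (by omega))
      refine ⟨min c _, lt_min hc hq0, ?_⟩
      intro j hj1 hjm p hp
      rcases Nat.lt_or_ge j (m+1) with h | h
      · exact (min_le_left _ _).trans (hcb j hj1 (by omega) p hp)
      · have hjeq : j = m + 1 := by omega
        subst hjeq
        exact (min_le_right _ _).trans (hqmin p hp)
  obtain ⟨c₀, hc₀, hc₀b⟩ := hcsmall J
  set c : ℝ := min c₀ 1 with hcdef
  have hc : 0 < c := lt_min hc₀ one_pos
  have hc1 : c ≤ 1 := min_le_right _ _
  have hcb : ∀ j : ℕ, 1 ≤ j → ∀ p ∈ U, c ≤ ‖Complex.exp (p.2 * ((j:ℂ) - p.1)) + 1‖ := by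
    intro j hj p hp
    rcases le_or_gt j J with h | h
    · exact (min_le_left _ _).trans (hc₀b j hj h p hp)
    · have h1 := hdlow p hp j
      have h2 := Real.exp_le_exp.2 (hJa j h.le)
      have : (1:ℝ) ≤ ‖Complex.exp (p.2 * ((j:ℂ) - p.1)) + 1‖ := by linarith
      linarith [min_le_right c₀ 1]
  -- global bound B
  have hBaux : ∀ d : ℕ, ∃ B : ℝ, 1 ≤ B ∧ ∀ j : ℕ, 1 ≤ j → J ≤ j + d → ∀ k : ℕ, ∀ p ∈ U,
      ‖qnest p.1 p.2 j k‖ ≤ B := by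
    intro d
    induction d with
    | zero => exact ⟨1, le_refl 1, fun j hj1 hjJ k p hp => htail k p hp j (by omega)⟩
    | succ d ih =>
      obtain ⟨B, hB1, hBb⟩ := ih
      refine ⟨max B (Real.exp B / c), le_trans hB1 (le_max_left _ _), ?_⟩
      intro j hj1 hjJ k p hp
      cases k with
      | zero =>
        rw [qnest_zero, norm_zero]
        exact le_trans zero_le_one (le_trans hB1 (le_max_left _ _))
      | succ k =>
        rw [qnest_succ, norm_div]
        have hnum : ‖Complex.exp (qnest p.1 p.2 (j+1) k)‖ ≤ Real.exp B :=
          norm_exp_le' (hBb (j+1) (by omega) (by omega) k p hp)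
        have hden : c ≤ ‖Complex.exp (p.2 * ((j:ℂ) - p.1)) + 1‖ := hcb j hj1 p hp
        exact le_trans (div_le_div₀ (Real.exp_pos B).le hnum hc hden) (le_max_right _ _)
  obtain ⟨B, hB1, hBb'⟩ := hBaux J
  have hBb : ∀ j : ℕ, 1 ≤ j → ∀ k : ℕ, ∀ p ∈ U, ‖qnest p.1 p.2 j k‖ ≤ B :=
    fun j hj => hBb' j hj (by omega)
  set L : ℝ := Real.exp B / c with hLdef
  have hexpB1 : (1:ℝ) ≤ Real.exp B := by
    have := Real.add_one_le_exp B; linarith [Real.exp_le_exp.2 hB1]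
  have hL1 : 1 ≤ L := by
    rw [hLdef, le_div_iff₀ hc]
    nlinarith
  have hL0 : 0 ≤ L := by linarith
  have h2L : (1:ℝ) ≤ 2*L := by linarith
  -- choose J₂
  obtain ⟨J₂, hJ₂gt⟩ := exists_nat_gt ((C + B + 2)/a)
  have hJ₂a : ∀ j : ℕ, J₂ ≤ j → B + 2 ≤ (j:ℝ)*a - C := by
    intro j hj
    have h1 : (J₂:ℝ) ≤ (j:ℝ) := Nat.cast_le.2 hj
    rw [div_lt_iff₀ ha0] at hJ₂gt
    nlinarith
  have hfac : ∀ p ∈ U, ∀ j : ℕ, J₂ ≤ j →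
      Real.exp B / ‖Complex.exp (p.2 * ((j:ℂ) - p.1)) + 1‖ ≤ 1/2 := by
    intro p hp j hj
    have h1 : 2 * Real.exp B ≤ ‖Complex.exp (p.2 * ((j:ℂ) - p.1)) + 1‖ := by
      have h2 := hdlow p hp j
      have h3 : Real.exp (B + 2) ≤ Real.exp ((j:ℝ)*a - C) := Real.exp_le_exp.2 (hJ₂a j hj)
      have h4 : Real.exp (B + 2) = Real.exp B * Real.exp 2 := by rw [← Real.exp_add]
      nlinarith [Real.exp_pos B]
    have hdpos : (0:ℝ) < ‖Complex.exp (p.2 * ((j:ℂ) - p.1)) + 1‖ := by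
      nlinarith [Real.exp_pos B]
    rw [div_le_iff₀ hdpos]
    linarith
  -- the geometric difference estimate
  have hdiff : ∀ k : ℕ, ∀ j : ℕ, 1 ≤ j → ∀ p ∈ U,
      ‖qnest p.1 p.2 j (k+1) - qnest p.1 p.2 j k‖ ≤ (2*L)^(J₂ - j) / c * (1/2)^k := by
    intro k
    induction k with
    | zero =>
      intro j hj p hp
      rw [qnest_succ, qnest_zero, qnest_zero, sub_zero, norm_div, Complex.exp_zero, norm_one]
      have h1 : 1/‖Complex.exp (p.2 * ((j:ℂ) - p.1)) + 1‖ ≤ 1/c :=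
        one_div_le_one_div_of_le hc (hcb j hj p hp)
      have h2 : (1:ℝ) ≤ (2*L)^(J₂ - j) := one_le_pow₀ h2L
      have h3 : 1/c ≤ (2*L)^(J₂ - j) / c := by
        apply div_le_div_of_nonneg_right ?_ hc.le
        exact h2
      calc 1/‖Complex.exp (p.2 * ((j:ℂ) - p.1)) + 1‖ ≤ 1/c := h1
        _ ≤ (2*L)^(J₂ - j) / c := h3
        _ = (2*L)^(J₂ - j) / c * (1/2)^0 := by ring
    | succ k ih =>
      intro j hj p hp
      have hdpos : (0:ℝ) < ‖Complex.exp (p.2 * ((j:ℂ) - p.1)) + 1‖ :=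
        lt_of_lt_of_le hc (hcb j hj p hp)
      have hlip : ‖Complex.exp (qnest p.1 p.2 (j+1) (k+1)) - Complex.exp (qnest p.1 p.2 (j+1) k)‖
          ≤ Real.exp B * ‖qnest p.1 p.2 (j+1) (k+1) - qnest p.1 p.2 (j+1) k‖ :=
        exp_lip (hBb (j+1) (by omega) (k+1) p hp) (hBb (j+1) (by omega) k p hp)
      have hih := ih (j+1) (by omega) p hp
      have key1 : ‖qnest p.1 p.2 j (k+1+1) - qnest p.1 p.2 j (k+1)‖ ≤
          (Real.exp B / ‖Complex.exp (p.2 * ((j:ℂ) - p.1)) + 1‖) *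
            ((2*L)^(J₂ - (j+1)) / c * (1/2)^k) := by
        rw [qnest_succ p.1 p.2 j (k+1), qnest_succ p.1 p.2 j k, div_sub_div_same, norm_div]
        rw [div_mul_eq_mul_div]
        apply div_le_div_of_nonneg_right ?_ hdpos.le
        exact hlip.trans (mul_le_mul_of_nonneg_left hih (Real.exp_pos B).le)
      refine key1.trans ?_
      have hRnn : (0:ℝ) ≤ (2*L)^(J₂ - (j+1)) / c * (1/2)^k := by
        apply mul_nonneg (div_nonneg (pow_nonneg (by linarith) _) hc.le)
        positivity
      rcases le_or_gt J₂ j with hcase | hcase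
      · have e0 : J₂ - j = 0 := by omega
        have e1 : J₂ - (j+1) = 0 := by omega
        rw [e0, e1, pow_zero]
        rw [e1, pow_zero] at hRnn
        have hf := hfac p hp j hcase
        calc (Real.exp B / ‖Complex.exp (p.2 * ((j:ℂ) - p.1)) + 1‖) * (1 / c * (1/2)^k)
            ≤ (1/2) * (1 / c * (1/2)^k) := mul_le_mul_of_nonneg_right hf hRnn
          _ = 1 / c * (1/2)^(k+1) := by ring
      · have e2 : J₂ - j = (J₂ - (j+1)) + 1 := by omega
        rw [e2, pow_succ]
        have hf : Real.exp B / ‖Complex.exp (p.2 * ((j:ℂ) - p.1)) + 1‖ ≤ L := by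
          rw [hLdef]
          exact div_le_div_of_nonneg_left (Real.exp_pos B).le hc (hcb j hj p hp)
        calc (Real.exp B / ‖Complex.exp (p.2 * ((j:ℂ) - p.1)) + 1‖) *
              ((2*L)^(J₂ - (j+1)) / c * (1/2)^k)
            ≤ L * ((2*L)^(J₂ - (j+1)) / c * (1/2)^k) := mul_le_mul_of_nonneg_right hf hRnn
          _ = (2*L)^(J₂ - (j+1)) * (2*L) / c * (1/2)^(k+1) := by ring
  -- conclude uniform Cauchy
  rw [Metric.uniformCauchySeqOn_iff]
  intro ε hε
  set A : ℝ := (2*L)^J₂ / c with hAdef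
  have hA0 : 0 < A := div_pos (pow_pos (by linarith) _) hc
  have hstep : ∀ k : ℕ, ∀ p ∈ U, dist (Phi (k+1) p.1 p.2) (Phi k p.1 p.2) ≤ A * (1/2)^k := by
    intro k p hp
    rw [dist_eq_norm, Phi_def, Phi_def]
    refine (hdiff k 1 le_rfl p hp).trans ?_
    have h1 : (2*L)^(J₂ - 1) ≤ (2*L)^J₂ := pow_le_pow_right₀ h2L (Nat.sub_le J₂ 1)
    have h2 : (2*L)^(J₂ - 1) / c ≤ A := by
      rw [hAdef]
      exact div_le_div_of_nonneg_right h1 hc.le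
    exact mul_le_mul_of_nonneg_right h2 (by positivity)
  have htele : ∀ (m d : ℕ), ∀ p ∈ U,
      dist (Phi m p.1 p.2) (Phi (m+d) p.1 p.2) ≤ 2*A*(1/2)^m - 2*A*(1/2)^(m+d) := by
    intro m d
    induction d with
    | zero => intro p hp; simp
    | succ d ih =>
      intro p hp
      have h1 := dist_triangle (Phi m p.1 p.2) (Phi (m+d) p.1 p.2) (Phi (m+d+1) p.1 p.2)
      have h2 : dist (Phi (m+d) p.1 p.2) (Phi (m+d+1) p.1 p.2) ≤ A * (1/2)^(m+d) := by
        rw [dist_comm]; exact hstep (m+d) p hp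
      have h3 := ih p hp
      have h4 : (2:ℝ)*A*(1/2)^(m+(d+1)) = A*(1/2)^(m+d) := by
        rw [show m+(d+1) = (m+d)+1 from rfl, pow_succ]; ring
      have : dist (Phi m p.1 p.2) (Phi (m+(d+1)) p.1 p.2) ≤
          (2*A*(1/2)^m - 2*A*(1/2)^(m+d)) + A*(1/2)^(m+d) := by
        rw [show m+(d+1) = (m+d)+1 from rfl]
        exact h1.trans (add_le_add h3 h2)
      rw [h4]
      linarith
  obtain ⟨N, hN⟩ := exists_pow_lt_of_lt_one (div_pos hε (by linarith : (0:ℝ) < 2*A))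
    (show (1/2:ℝ) < 1 by norm_num)
  have hNε : 2*A*(1/2)^N < ε := by
    rw [lt_div_iff₀ (by linarith : (0:ℝ) < 2*A)] at hN
    calc 2*A*(1/2)^N = (1/2)^N * (2*A) := by ring
      _ < ε := hN
  have main : ∀ m n : ℕ, N ≤ m → m ≤ n → ∀ p ∈ U,
      dist (Phi m p.1 p.2) (Phi n p.1 p.2) < ε := by
    intro m n hm hmn p hp
    obtain ⟨d, rfl⟩ := Nat.exists_eq_add_of_le hmn
    have h1 := htele m d p hp
    have h2 : (1/2:ℝ)^m ≤ (1/2)^N := pow_le_pow_of_le_one (by norm_num) (by norm_num) hm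
    have h3 : (0:ℝ) ≤ 2*A*(1/2)^(m+d) := by positivity
    have h4 : 2*A*(1/2:ℝ)^m ≤ 2*A*(1/2)^N :=
      mul_le_mul_of_nonneg_left h2 (by linarith)
    linarith
  refine ⟨N, fun m hm n hn p hp => ?_⟩
  rcases le_total m n with h | h
  · exact main m n hm h p hp
  · rw [dist_comm]; exact main n m hn h p hp

/-- the nested compositions `Φ_n` converge, uniformly on compact subsets
of 𝕃, to a function `β` holomorphic on 𝕃 (differentiable in each variable). -/
theorem beta_family_exists :
    ∃ β : ℂ × ℂ → ℂ,
      (∀ p ∈ Lset, DifferentiableAt ℂ (fun s => β (s, p.2)) p.1 ∧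
        DifferentiableAt ℂ (fun l => β (p.1, l)) p.2) ∧
      ∀ U : Set (ℂ × ℂ), IsCompact U → U ⊆ Lset →
        TendstoUniformlyOn (fun n (p : ℂ × ℂ) => Phi n p.1 p.2) β atTop U := by
  have hconv : ∀ p ∈ Lset, ∃ l, Tendsto (fun n => Phi n p.1 p.2) atTop (𝓝 l) := by
    intro p hp
    have hk := key_cauchy {p} isCompact_singleton (by simpa using hp)
    rw [Metric.uniformCauchySeqOn_iff] at hk
    have hcs : CauchySeq (fun n => Phi n p.1 p.2) := by
      rw [Metric.cauchySeq_iff]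
      intro ε hε
      obtain ⟨N, hN⟩ := hk ε hε
      exact ⟨N, fun m hm n hn => hN m hm n hn p rfl⟩
    exact cauchySeq_tendsto_of_complete hcs
  set β : ℂ × ℂ → ℂ := fun p => limUnder atTop (fun n => Phi n p.1 p.2) with hβdef
  have hβ : ∀ p ∈ Lset, Tendsto (fun n => Phi n p.1 p.2) atTop (𝓝 (β p)) :=
    fun p hp => tendsto_nhds_limUnder (hconv p hp)
  have hUnifβ : ∀ U : Set (ℂ × ℂ), IsCompact U → U ⊆ Lset →
      TendstoUniformlyOn (fun n (p : ℂ × ℂ) => Phi n p.1 p.2) β atTop U :=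
    fun U hU hUL => (key_cauchy U hU hUL).tendstoUniformlyOn_of_tendsto
      (fun p hp => hβ p (hUL hp))
  refine ⟨β, fun p hp => ?_, hUnifβ⟩
  obtain ⟨ε, hε0, hball⟩ := Metric.isOpen_iff.1 isOpen_Lset p hp
  have hε2 : 0 < ε/2 := by linarith
  constructor
  · -- differentiability in s
    have hsub : ∀ z ∈ Metric.closedBall p.1 (ε/2), (z, p.2) ∈ Lset := by
      intro z hz
      apply hball
      rw [Metric.mem_ball, Prod.dist_eq]
      simp only [dist_self]
      rw [Metric.mem_closedBall] at hz
      have : max (dist z p.1) 0 ≤ ε/2 := by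
        rw [max_le_iff]; exact ⟨hz, by linarith⟩
      linarith [this]
    have hK : IsCompact ((fun z => (z, p.2)) '' Metric.closedBall p.1 (ε/2)) :=
      (isCompact_closedBall _ _).image (continuous_id.prodMk continuous_const)
    have hKL : ((fun z => (z, p.2)) '' Metric.closedBall p.1 (ε/2)) ⊆ Lset := by
      rintro _ ⟨z, hz, rfl⟩
      exact hsub z hz
    have hT := (hUnifβ _ hK hKL).comp (fun z => (z, p.2))
    have hT3 : TendstoUniformlyOn (fun n z => Phi n z p.2) (fun z => β (z, p.2)) atTop
        (Metric.closedBall p.1 (ε/2)) :=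
      hT.mono (fun z hz => Set.mem_image_of_mem _ hz)
    have hT4 : TendstoLocallyUniformlyOn (fun n z => Phi n z p.2) (fun z => β (z, p.2)) atTop
        (Metric.ball p.1 (ε/2)) :=
      hT3.tendstoLocallyUniformlyOn.mono Metric.ball_subset_closedBall
    have hdiffn : ∀ᶠ n in atTop, DifferentiableOn ℂ (fun z => Phi n z p.2)
        (Metric.ball p.1 (ε/2)) := by
      refine Filter.Eventually.of_forall (fun n => fun z hz => ?_)
      have hmem := hsub z (Metric.ball_subset_closedBall hz)
      have hd : ∀ i : ℕ, 1 ≤ i → Complex.exp (p.2 * ((i:ℂ) - z)) + 1 ≠ 0 :=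
        fun i hi => denom_ne_zero hmem hi
      exact ((qnest_diff_s p.2 n 1 z hd le_rfl).differentiableWithinAt :
        DifferentiableWithinAt ℂ (fun z => Phi n z p.2) _ z)
    have hdOn := hT4.differentiableOn hdiffn Metric.isOpen_ball
    exact hdOn.differentiableAt (Metric.isOpen_ball.mem_nhds (Metric.mem_ball_self hε2))
  · -- differentiability in λ
    have hsub : ∀ l ∈ Metric.closedBall p.2 (ε/2), (p.1, l) ∈ Lset := by
      intro l hl
      apply hball
      rw [Metric.mem_ball, Prod.dist_eq]
      simp only [dist_self]
      rw [Metric.mem_closedBall] at hl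
      have : max 0 (dist l p.2) ≤ ε/2 := by
        rw [max_le_iff]; exact ⟨by linarith, hl⟩
      linarith [this]
    have hK : IsCompact ((fun l => (p.1, l)) '' Metric.closedBall p.2 (ε/2)) :=
      (isCompact_closedBall _ _).image (continuous_const.prodMk continuous_id)
    have hKL : ((fun l => (p.1, l)) '' Metric.closedBall p.2 (ε/2)) ⊆ Lset := by
      rintro _ ⟨l, hl, rfl⟩
      exact hsub l hl
    have hT := (hUnifβ _ hK hKL).comp (fun l => (p.1, l))
    have hT3 : TendstoUniformlyOn (fun n l => Phi n p.1 l) (fun l => β (p.1, l)) atTop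
        (Metric.closedBall p.2 (ε/2)) :=
      hT.mono (fun l hl => Set.mem_image_of_mem _ hl)
    have hT4 : TendstoLocallyUniformlyOn (fun n l => Phi n p.1 l) (fun l => β (p.1, l)) atTop
        (Metric.ball p.2 (ε/2)) :=
      hT3.tendstoLocallyUniformlyOn.mono Metric.ball_subset_closedBall
    have hdiffn : ∀ᶠ n in atTop, DifferentiableOn ℂ (fun l => Phi n p.1 l)
        (Metric.ball p.2 (ε/2)) := by
      refine Filter.Eventually.of_forall (fun n => fun l hl => ?_)
      have hmem := hsub l (Metric.ball_subset_closedBall hl)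
      have hd : ∀ i : ℕ, 1 ≤ i → Complex.exp (l * ((i:ℂ) - p.1)) + 1 ≠ 0 :=
        fun i hi => denom_ne_zero hmem hi
      exact ((qnest_diff_lam p.1 n 1 l hd le_rfl).differentiableWithinAt :
        DifferentiableWithinAt ℂ (fun l => Phi n p.1 l) _ l)
    have hdOn := hT4.differentiableOn hdiffn Metric.isOpen_ball
    exact hdOn.differentiableAt (Metric.isOpen_ball.mem_nhds (Metric.mem_ball_self hε2))
end

section
/- Fix a real number λ > 0. For every s ∈ ℂ with Re s < 1 the limit β(s,λ) = lim_{n→∞} Φ_n(s,λ) exists, and β(s,λ) · e^{−λ(s−1)} → 1 as Re s → −∞, uniformly in Im s: for every ε > 0 there exists R ∈ ℝ such that |β(s,λ) e^{−λ(s−1)} − 1| < ε whenever Re s < R. In particular β(s,λ) → 0 as Re s → −∞. -/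
open Complex Filter Topology

namespace BetaAux

lemma qnest_succ (s lam : ℂ) (j k : ℕ) :
    qnest s lam j (k + 1) = Complex.exp (qnest s lam (j + 1) k) /
      (Complex.exp (lam * ((j : ℂ) - s)) + 1) := rfl

lemma qnest_zero (s lam : ℂ) (j : ℕ) : qnest s lam j 0 = 0 := rfl

lemma re_aux (s : ℂ) (lam : ℝ) (j : ℕ) :
    ((lam : ℂ) * ((j : ℂ) - s)).re = lam * ((j : ℝ) - s.re) := by
  simp [Complex.mul_re]

lemma norm_exp' (z : ℂ) : ‖Complex.exp z‖ = Real.exp z.re := by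
  rw [Complex.norm_exp]

lemma norm_exp_le (z : ℂ) : ‖Complex.exp z‖ ≤ Real.exp ‖z‖ := by
  rw [norm_exp']
  exact Real.exp_le_exp.2 (Complex.re_le_norm z)

lemma denom_lb (s : ℂ) (lam : ℝ) (j : ℕ) :
    Real.exp (lam * ((j : ℝ) - s.re)) - 1 ≤
      ‖Complex.exp ((lam : ℂ) * ((j : ℂ) - s)) + 1‖ := by
  have h := norm_add_le (Complex.exp ((lam : ℂ) * ((j : ℂ) - s)) + 1) (-1)
  simp only [add_neg_cancel_right, norm_neg, norm_one] at h
  rw [norm_exp', re_aux] at h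
  linarith

lemma e2_ge : (73 / 10 : ℝ) ≤ Real.exp 2 := by
  have h2 : Real.exp 2 = Real.exp 1 * Real.exp 1 := by
    rw [← Real.exp_add]; norm_num
  nlinarith [Real.exp_one_gt_d9]

lemma e14_le : Real.exp (1 / 4 : ℝ) ≤ 4 / 3 := by
  have h' : (3 / 4 : ℝ) ≤ (Real.exp (1 / 4 : ℝ))⁻¹ := by
    rw [← Real.exp_neg]
    have := Real.add_one_le_exp (-(1 / 4) : ℝ)
    linarith
  have hpos : (0 : ℝ) < Real.exp (1 / 4 : ℝ) := Real.exp_pos _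
  have hc : Real.exp (1 / 4 : ℝ) * (Real.exp (1 / 4 : ℝ))⁻¹ = 1 :=
    mul_inv_cancel₀ hpos.ne'
  nlinarith [mul_le_mul_of_nonneg_left h' hpos.le]

lemma aux_mono (s : ℂ) (lam : ℝ) (hlam : 0 < lam) (J : ℕ)
    (hJ : Real.exp 2 ≤ Real.exp (lam * ((J : ℝ) - s.re)))
    (t : ℝ) (ht : (J : ℝ) ≤ t) :
    Real.exp 2 ≤ Real.exp (lam * (t - s.re)) := by
  refine hJ.trans (Real.exp_le_exp.2 ?_)
  have : (J : ℝ) - s.re ≤ t - s.re := by linarith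
  nlinarith

/-- All nested values from a good level on have norm at most 1/4. -/
lemma qnest_norm_le (s : ℂ) (lam : ℝ) (hlam : 0 < lam) (J : ℕ)
    (hJ : Real.exp 2 ≤ Real.exp (lam * ((J : ℝ) - s.re))) :
    ∀ k j, J ≤ j → ‖qnest s (lam : ℂ) j k‖ ≤ 1 / 4 := by
  intro k
  induction k with
  | zero => intro j _; simp [qnest_zero]
  | succ k ih =>
    intro j hj
    have hj1 : J ≤ j + 1 := hj.trans (Nat.le_succ j)
    have hinner := ih (j + 1) hj1
    have hA : Real.exp 2 ≤ Real.exp (lam * ((j : ℝ) - s.re)) :=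
      aux_mono s lam hlam J hJ _ (Nat.cast_le.2 hj)
    have hD : (63 / 10 : ℝ) ≤ ‖Complex.exp ((lam : ℂ) * ((j : ℂ) - s)) + 1‖ := by
      have := denom_lb s lam j
      have := e2_ge
      linarith
    rw [qnest_succ, norm_div]
    have hnum : ‖Complex.exp (qnest s (lam : ℂ) (j + 1) k)‖ ≤ 4 / 3 := by
      refine (norm_exp_le _).trans ?_
      refine le_trans (Real.exp_le_exp.2 hinner) e14_le
    calc ‖Complex.exp (qnest s (lam : ℂ) (j + 1) k)‖ /
          ‖Complex.exp ((lam : ℂ) * ((j : ℂ) - s)) + 1‖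
        ≤ (4 / 3) / (63 / 10) := by
          apply div_le_div₀ (by norm_num) hnum (by norm_num) hD
      _ ≤ 1 / 4 := by norm_num

/-- Geometric decay of consecutive differences. -/
lemma qnest_diff_le (s : ℂ) (lam : ℝ) (hlam : 0 < lam) (J : ℕ)
    (hJ : Real.exp 2 ≤ Real.exp (lam * ((J : ℝ) - s.re))) :
    ∀ k j, J ≤ j → ‖qnest s (lam : ℂ) j (k + 1) - qnest s (lam : ℂ) j k‖ ≤
      3 / (Real.exp (lam * ((j : ℝ) + (k : ℝ) - s.re)) - 1) := by
  intro k
  induction k with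
  | zero =>
    intro j hj
    have hA : Real.exp 2 ≤ Real.exp (lam * ((j : ℝ) - s.re)) :=
      aux_mono s lam hlam J hJ _ (Nat.cast_le.2 hj)
    have hD := denom_lb s lam j
    have he2 := e2_ge
    rw [qnest_zero, sub_zero, qnest_succ, qnest_zero, Complex.exp_zero, norm_div, norm_one]
    have h1 : (j : ℝ) + ((0 : ℕ) : ℝ) - s.re = (j : ℝ) - s.re := by push_cast; ring
    rw [h1]
    apply div_le_div₀ (by norm_num) (by norm_num) (by linarith) (by linarith)
  | succ k ih =>
    intro j hj
    have hj1 : J ≤ j + 1 := hj.trans (Nat.le_succ j)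
    have hA : Real.exp 2 ≤ Real.exp (lam * ((j : ℝ) - s.re)) :=
      aux_mono s lam hlam J hJ _ (Nat.cast_le.2 hj)
    have hA1 : Real.exp 2 ≤ Real.exp (lam * ((j : ℝ) + 1 + (k : ℝ) - s.re)) := by
      refine aux_mono s lam hlam J hJ _ ?_
      have h1 : (J : ℝ) ≤ (j : ℝ) := Nat.cast_le.2 hj
      have h2 : (0 : ℝ) ≤ (k : ℝ) := Nat.cast_nonneg k
      linarith
    have he2 := e2_ge
    have hD := denom_lb s lam j
    set x := qnest s (lam : ℂ) (j + 1) (k + 1) with hx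
    set y := qnest s (lam : ℂ) (j + 1) k with hy
    have hxn : ‖x‖ ≤ 1 / 4 := qnest_norm_le s lam hlam J hJ (k + 1) (j + 1) hj1
    have hyn : ‖y‖ ≤ 1 / 4 := qnest_norm_le s lam hlam J hJ k (j + 1) hj1
    have hd : ‖x - y‖ ≤ 3 / (Real.exp (lam * ((j : ℝ) + 1 + (k : ℝ) - s.re)) - 1) := by
      have := ih (j + 1) hj1
      have hc : ((j + 1 : ℕ) : ℝ) = (j : ℝ) + 1 := by push_cast; ring
      rw [hc] at this
      exact this
    have hApos : (63 / 10 : ℝ) ≤ Real.exp (lam * ((j : ℝ) + 1 + (k : ℝ) - s.re)) - 1 := by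
      linarith
    -- Lipschitz bound for exp on the ball
    have hlip : ‖Complex.exp x - Complex.exp y‖ ≤ 3 * ‖x - y‖ := by
      have h1 : ‖x - y‖ < 1 := by
        calc ‖x - y‖ ≤ ‖x‖ + ‖y‖ := norm_sub_le x y
          _ < 1 := by linarith
      have h2 := Complex.locally_lipschitz_exp zero_le_one le_rfl y x h1
      have h3 : ‖Complex.exp y‖ ≤ 4 / 3 :=
        (norm_exp_le y).trans ((Real.exp_le_exp.2 hyn).trans e14_le)
      calc ‖Complex.exp x - Complex.exp y‖ ≤ (1 + 1) * ‖Complex.exp y‖ * ‖x - y‖ := h2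
        _ ≤ 3 * ‖x - y‖ := by nlinarith [norm_nonneg (x - y)]
    have e1 : qnest s (lam : ℂ) j (k + 1 + 1) =
        Complex.exp x / (Complex.exp ((lam : ℂ) * ((j : ℂ) - s)) + 1) := rfl
    have e2 : qnest s (lam : ℂ) j (k + 1) =
        Complex.exp y / (Complex.exp ((lam : ℂ) * ((j : ℂ) - s)) + 1) := rfl
    have hkey : qnest s (lam : ℂ) j (k + 1 + 1) - qnest s (lam : ℂ) j (k + 1) =
        (Complex.exp x - Complex.exp y) / (Complex.exp ((lam : ℂ) * ((j : ℂ) - s)) + 1) := by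
      rw [e1, e2, div_sub_div_same]
    rw [hkey, norm_div]
    have hnum : ‖Complex.exp x - Complex.exp y‖ ≤
        9 / (Real.exp (lam * ((j : ℝ) + 1 + (k : ℝ) - s.re)) - 1) := by
      calc ‖Complex.exp x - Complex.exp y‖ ≤ 3 * ‖x - y‖ := hlip
        _ ≤ 3 * (3 / (Real.exp (lam * ((j : ℝ) + 1 + (k : ℝ) - s.re)) - 1)) := by
            nlinarith
        _ = 9 / (Real.exp (lam * ((j : ℝ) + 1 + (k : ℝ) - s.re)) - 1) := by ring
    have harg : (j : ℝ) + ((k : ℕ) + 1 : ℕ) - s.re = (j : ℝ) + 1 + (k : ℝ) - s.re := by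
      push_cast; ring
    rw [harg]
    calc ‖Complex.exp x - Complex.exp y‖ / ‖Complex.exp ((lam : ℂ) * ((j : ℂ) - s)) + 1‖
        ≤ (9 / (Real.exp (lam * ((j : ℝ) + 1 + (k : ℝ) - s.re)) - 1)) / 3 := by
          apply div_le_div₀ _ hnum (by norm_num) (by linarith)
          positivity
      _ = 3 / (Real.exp (lam * ((j : ℝ) + 1 + (k : ℝ) - s.re)) - 1) := by ring

/-- Convergence of the tail sequence at a good level. -/
lemma tendsto_qnest (s : ℂ) (lam : ℝ) (hlam : 0 < lam) (J : ℕ)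
    (hJ : Real.exp 2 ≤ Real.exp (lam * ((J : ℝ) - s.re))) :
    ∃ L, Tendsto (fun k => qnest s (lam : ℂ) J k) atTop (𝓝 L) := by
  have he2 := e2_ge
  have hJpos : (63 / 10 : ℝ) ≤ Real.exp (lam * ((J : ℝ) - s.re)) - 1 := by linarith
  have hC : CauchySeq (fun k => qnest s (lam : ℂ) J k) := by
    apply cauchySeq_of_dist_le_of_summable
      (d := fun k => 3 / (Real.exp (lam * ((J : ℝ) - s.re)) - 1) * Real.exp (-lam) ^ k)
    · intro n
      rw [dist_eq_norm, norm_sub_rev]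
      refine (qnest_diff_le s lam hlam J hJ n J le_rfl).trans ?_
      have hE : Real.exp (lam * ((J : ℝ) + (n : ℝ) - s.re)) =
          Real.exp (lam * ((J : ℝ) - s.re)) * Real.exp (lam * n) := by
        rw [← Real.exp_add]; ring_nf
      have hEn1 : (1 : ℝ) ≤ Real.exp (lam * n) := by
        apply Real.one_le_exp
        positivity
      have hlow : (Real.exp (lam * ((J : ℝ) - s.re)) - 1) * Real.exp (lam * n) ≤
          Real.exp (lam * ((J : ℝ) + (n : ℝ) - s.re)) - 1 := by
        rw [hE]; nlinarith
      have hposn : (0 : ℝ) < (Real.exp (lam * ((J : ℝ) - s.re)) - 1) * Real.exp (lam * n) := by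
        have := Real.exp_pos (lam * n); nlinarith
      calc 3 / (Real.exp (lam * ((J : ℝ) + (n : ℝ) - s.re)) - 1)
          ≤ 3 / ((Real.exp (lam * ((J : ℝ) - s.re)) - 1) * Real.exp (lam * n)) := by
            apply div_le_div_of_nonneg_left (by norm_num) hposn hlow
        _ = 3 / (Real.exp (lam * ((J : ℝ) - s.re)) - 1) * Real.exp (-lam) ^ n := by
            have hinv : Real.exp (-lam) ^ n = (Real.exp (lam * n))⁻¹ := by
              rw [← Real.exp_nat_mul, ← Real.exp_neg]; congr 1; ring
            rw [hinv, div_mul_eq_div_div, div_eq_mul_inv]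
    · apply Summable.mul_left
      apply summable_geometric_of_lt_one (Real.exp_pos _).le
      rw [Real.exp_lt_one_iff]
      linarith
  exact cauchySeq_tendsto_of_complete hC

/-- Outer composition map. -/
noncomputable def Fmap (s lam : ℂ) : ℕ → ℕ → ℂ → ℂ
  | _, 0, z => z
  | j, m + 1, z => Complex.exp (Fmap s lam (j + 1) m z) /
      (Complex.exp (lam * ((j : ℂ) - s)) + 1)

lemma Fmap_zero (s lam : ℂ) (j : ℕ) (z : ℂ) : Fmap s lam j 0 z = z := rfl

lemma Fmap_succ (s lam : ℂ) (j m : ℕ) (z : ℂ) :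
    Fmap s lam j (m + 1) z = Complex.exp (Fmap s lam (j + 1) m z) /
      (Complex.exp (lam * ((j : ℂ) - s)) + 1) := rfl

lemma qnest_shift (s lam : ℂ) : ∀ m j n,
    qnest s lam j (m + n) = Fmap s lam j m (qnest s lam (j + m) n) := by
  intro m
  induction m with
  | zero => intro j n; simp [Fmap_zero]
  | succ m ih =>
    intro j n
    have h1 : m + 1 + n = (m + n) + 1 := by omega
    rw [h1, qnest_succ, Fmap_succ, ih (j + 1) n]
    have h2 : j + 1 + m = j + (m + 1) := by omega
    rw [h2]

lemma Fmap_cont (s lam : ℂ) : ∀ m j, Continuous (Fmap s lam j m) := by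
  intro m
  induction m with
  | zero =>
    intro j
    have : Fmap s lam j 0 = fun z : ℂ => z := rfl
    rw [this]; exact continuous_id
  | succ m ih =>
    intro j
    have : Fmap s lam j (m + 1) = fun z =>
        Complex.exp (Fmap s lam (j + 1) m z) /
          (Complex.exp (lam * ((j : ℂ) - s)) + 1) := rfl
    rw [this]
    exact (Complex.continuous_exp.comp (ih (j + 1))).div_const _

lemma exists_lim (lam : ℝ) (hlam : 0 < lam) (s : ℂ) :
    ∃ L, Tendsto (fun n => Phi n s (lam : ℂ)) atTop (𝓝 L) := by
  obtain ⟨J, hJn⟩ := exists_nat_ge (s.re + 2 / lam)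
  have hJ : Real.exp 2 ≤ Real.exp (lam * (((1 + J : ℕ) : ℝ) - s.re)) := by
    apply Real.exp_le_exp.2
    have h2 : 2 ≤ lam * ((J : ℝ) - s.re) := by
      have := (div_le_iff₀ hlam).1 (by linarith : 2 / lam ≤ (J : ℝ) - s.re)
      linarith [this]
    have hc : ((1 + J : ℕ) : ℝ) = (J : ℝ) + 1 := by push_cast; ring
    rw [hc]
    nlinarith
  obtain ⟨L, hL⟩ := tendsto_qnest s lam hlam (1 + J) hJ
  refine ⟨Fmap s (lam : ℂ) 1 J L, ?_⟩
  have h1 : Tendsto (fun n => Fmap s (lam : ℂ) 1 J (qnest s (lam : ℂ) (1 + J) n)) atTop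
      (𝓝 (Fmap s (lam : ℂ) 1 J L)) :=
    ((Fmap_cont s (lam : ℂ) J 1).tendsto L).comp hL
  rw [← tendsto_add_atTop_iff_nat J]
  have heq : (fun n => Phi (n + J) s (lam : ℂ)) =
      fun n => Fmap s (lam : ℂ) 1 J (qnest s (lam : ℂ) (1 + J) n) := by
    funext n
    rw [Phi, add_comm n J, qnest_shift s (lam : ℂ) J 1 n]
  rw [heq]
  exact h1

/-- Bound on the inner value at level 2. -/
lemma inner_bound (s : ℂ) (lam : ℝ) (hlam : 0 < lam)
    (hP : Real.exp 2 ≤ Real.exp (lam * ((1 : ℝ) - s.re))) (m : ℕ) :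
    ‖qnest s (lam : ℂ) 2 m‖ ≤ 2 / (Real.exp (lam * ((1 : ℝ) - s.re)) - 1) := by
  have he2 := e2_ge
  have hP1 : Real.exp 2 ≤ Real.exp (lam * (((1 : ℕ) : ℝ) - s.re)) := by
    rw [Nat.cast_one]; exact hP
  have hA1pos : (63 / 10 : ℝ) ≤ Real.exp (lam * ((1 : ℝ) - s.re)) - 1 := by linarith
  match m with
  | 0 =>
    rw [qnest_zero]
    simp only [norm_zero]
    positivity
  | k + 1 =>
    rw [qnest_succ, norm_div]
    have hinner : ‖qnest s (lam : ℂ) 3 k‖ ≤ 1 / 4 :=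
      qnest_norm_le s lam hlam 1 hP1 k 3 (by omega)
    have hnum : ‖Complex.exp (qnest s (lam : ℂ) (2 + 1) k)‖ ≤ 4 / 3 := by
      refine (norm_exp_le _).trans ((Real.exp_le_exp.2 ?_).trans e14_le)
      exact hinner
    have hA2 : Real.exp (lam * ((1 : ℝ) - s.re)) ≤ Real.exp (lam * (((2 : ℕ) : ℝ) - s.re)) := by
      apply Real.exp_le_exp.2
      have : ((2 : ℕ) : ℝ) = 2 := by norm_num
      nlinarith
    have hD2 : Real.exp (lam * ((1 : ℝ) - s.re)) - 1 ≤
        ‖Complex.exp ((lam : ℂ) * (((2 : ℕ) : ℂ) - s)) + 1‖ := by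
      have := denom_lb s lam 2
      linarith
    calc ‖Complex.exp (qnest s (lam : ℂ) (2 + 1) k)‖ /
          ‖Complex.exp ((lam : ℂ) * (((2 : ℕ) : ℂ) - s)) + 1‖
        ≤ (4 / 3) / (Real.exp (lam * ((1 : ℝ) - s.re)) - 1) := by
          apply div_le_div₀ (by positivity) hnum (by linarith) hD2
      _ ≤ 2 / (Real.exp (lam * ((1 : ℝ) - s.re)) - 1) := by
          apply div_le_div₀ (by norm_num) (by norm_num) (by linarith) le_rfl

lemma e12_le : Real.exp (1 / 2 : ℝ) ≤ 2 := by
  have h' : (1 / 2 : ℝ) ≤ (Real.exp (1 / 2 : ℝ))⁻¹ := by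
    rw [← Real.exp_neg]
    have := Real.add_one_le_exp (-(1 / 2) : ℝ)
    linarith
  have hpos : (0 : ℝ) < Real.exp (1 / 2 : ℝ) := Real.exp_pos _
  have hc : Real.exp (1 / 2 : ℝ) * (Real.exp (1 / 2 : ℝ))⁻¹ = 1 :=
    mul_inv_cancel₀ hpos.ne'
  nlinarith [mul_le_mul_of_nonneg_left h' hpos.le]

lemma phi_tail_bounds (s : ℂ) (lam : ℝ) (hlam : 0 < lam)
    (hP : Real.exp 2 ≤ Real.exp (lam * ((1 : ℝ) - s.re))) (m : ℕ) :
    ‖Phi (m + 1) s (lam : ℂ) * Complex.exp (-(lam : ℂ) * (s - 1)) - 1‖ ≤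
        9 / (Real.exp (lam * ((1 : ℝ) - s.re)) - 1) ∧
      ‖Phi (m + 1) s (lam : ℂ)‖ ≤ 2 / (Real.exp (lam * ((1 : ℝ) - s.re)) - 1) := by
  have he2 := e2_ge
  set A := Real.exp (lam * ((1 : ℝ) - s.re)) with hAdef
  have hx : (63 / 10 : ℝ) ≤ A - 1 := by linarith
  set w := Complex.exp (-(lam : ℂ) * (s - 1)) with hwdef
  have hw1 : Complex.exp ((lam : ℂ) * (((1 : ℕ) : ℂ) - s)) = w := by
    rw [hwdef]; congr 1; push_cast; ring
  have hwnorm : ‖w‖ = A := by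
    rw [hwdef, norm_exp', hAdef]
    congr 1
    have h1 : (-(lam : ℂ) * (s - 1)) = (lam : ℂ) * ((1 : ℂ) - s) := by ring
    rw [h1]
    simp [Complex.mul_re]
  have h2eq : qnest s (lam : ℂ) (1 + 1) m = qnest s (lam : ℂ) 2 m := by norm_num
  set u := qnest s (lam : ℂ) 2 m with hudef
  have hu : ‖u‖ ≤ 2 / (A - 1) := inner_bound s lam hlam hP m
  have hu12 : ‖u‖ ≤ 1 / 2 := by
    refine hu.trans ?_
    rw [div_le_iff₀ (by linarith)]
    linarith
  have hPhi : Phi (m + 1) s (lam : ℂ) = Complex.exp u / (w + 1) := by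
    rw [Phi, qnest_succ, hw1, h2eq]
  have hDnorm : A - 1 ≤ ‖w + 1‖ := by
    have := denom_lb s lam 1
    rw [hw1] at this
    simpa using this
  have hDpos : (0 : ℝ) < ‖w + 1‖ := by linarith
  have hDne : w + 1 ≠ 0 := by
    intro h; rw [h, norm_zero] at hDpos; exact lt_irrefl _ hDpos
  have hexpu : ‖Complex.exp u‖ ≤ 2 := by
    refine (norm_exp_le u).trans ?_
    exact (Real.exp_le_exp.2 hu12).trans e12_le
  constructor
  · have hexp1 : ‖Complex.exp u - 1‖ ≤ 2 * ‖u‖ := by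
      have h1 : ‖u‖ ≤ 1 := by
        linarith
      have := Complex.norm_exp_sub_one_le h1
      exact this
    have hkey : Phi (m + 1) s (lam : ℂ) * w - 1 =
        (w * (Complex.exp u - 1) - 1) / (w + 1) := by
      rw [hPhi]; field_simp; ring
    rw [hkey, norm_div]
    have hnum : ‖w * (Complex.exp u - 1) - 1‖ ≤ 9 := by
      have h1 : ‖w * (Complex.exp u - 1) - 1‖ ≤ ‖w‖ * ‖Complex.exp u - 1‖ + 1 := by
        calc ‖w * (Complex.exp u - 1) - 1‖ ≤ ‖w * (Complex.exp u - 1)‖ + ‖(1 : ℂ)‖ :=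
              norm_sub_le _ _
          _ = ‖w‖ * ‖Complex.exp u - 1‖ + 1 := by rw [norm_mul, norm_one]
      have h2 : ‖w‖ * ‖Complex.exp u - 1‖ ≤ A * (2 * (2 / (A - 1))) := by
        rw [hwnorm]
        apply mul_le_mul_of_nonneg_left _ (by linarith : (0:ℝ) ≤ A)
        refine hexp1.trans ?_
        linarith
      have h3 : A * (2 * (2 / (A - 1))) ≤ 8 := by
        have he : A * (2 * (2 / (A - 1))) = 4 * A / (A - 1) := by ring
        rw [he, div_le_iff₀ (by linarith : (0:ℝ) < A - 1)]
        nlinarith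
      linarith
    exact div_le_div₀ (by norm_num) hnum (by linarith) hDnorm
  · rw [hPhi, norm_div]
    exact div_le_div₀ (by norm_num) hexpu (by linarith) hDnorm

lemma e2_le9 : Real.exp 2 ≤ 9 := by
  have h2 : Real.exp 2 = Real.exp 1 * Real.exp 1 := by
    rw [← Real.exp_add]; norm_num
  nlinarith [Real.exp_one_lt_d9, Real.exp_pos 1]

end BetaAux

open BetaAux in
/-- for real λ > 0, β(s,λ) exists for Re s < 1, and
β(s,λ)·e^{−λ(s−1)} → 1 uniformly as Re s → −∞; in particular β(s,λ) → 0. -/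
theorem beta_asymptotic_at_minus_infinity
    (lam : ℝ) (hlam : 0 < lam) :
    ∃ β : ℂ → ℂ,
      (∀ s : ℂ, s.re < 1 →
        Tendsto (fun n => Phi n s (lam : ℂ)) atTop (nhds (β s))) ∧
      (∀ ε : ℝ, 0 < ε → ∃ R : ℝ, ∀ s : ℂ, s.re < R →
        ‖β s * Complex.exp (-(lam : ℂ) * (s - 1)) - 1‖ < ε) ∧
      (∀ ε : ℝ, 0 < ε → ∃ R : ℝ, ∀ s : ℂ, s.re < R → ‖β s‖ < ε) := by
  refine ⟨fun s => (exists_lim lam hlam s).choose,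
    fun s _ => (exists_lim lam hlam s).choose_spec, ?_, ?_⟩
  · intro ε hε
    refine ⟨1 - (max 8 (9 / ε + 1)) / lam, ?_⟩
    intro s hs
    set M := max 8 (9 / ε + 1) with hMdef
    have hM8 : (8 : ℝ) ≤ M := le_max_left _ _
    have hMε : 9 / ε + 1 ≤ M := le_max_right _ _
    have hlamr : M < lam * (1 - s.re) := by
      have h1 : M / lam < 1 - s.re := by linarith
      calc M = lam * (M / lam) := by field_simp
        _ < lam * (1 - s.re) := by exact mul_lt_mul_of_pos_left h1 hlam
    set A := Real.exp (lam * ((1 : ℝ) - s.re)) with hAdef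
    have hAe : lam * (1 - s.re) + 1 ≤ A := Real.add_one_le_exp _
    have hA9 : M + 1 < A := by linarith
    have hP : Real.exp 2 ≤ A := by
      have := e2_le9
      linarith
    have hβ := (exists_lim lam hlam s).choose_spec
    set w := Complex.exp (-(lam : ℂ) * (s - 1)) with hwdef
    have hlim : Tendsto (fun n => ‖Phi n s (lam : ℂ) * w - 1‖) atTop
        (𝓝 ‖(exists_lim lam hlam s).choose * w - 1‖) :=
      ((hβ.mul_const w).sub_const 1).norm
    have hle : ‖(exists_lim lam hlam s).choose * w - 1‖ ≤ 9 / (A - 1) := by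
      refine le_of_tendsto hlim ?_
      filter_upwards [eventually_ge_atTop 1] with n hn
      obtain ⟨m, rfl⟩ : ∃ m, n = m + 1 := ⟨n - 1, by omega⟩
      exact (phi_tail_bounds s lam hlam hP m).1
    have hfin : 9 / (A - 1) < ε := by
      rw [div_lt_iff₀ (by linarith : (0 : ℝ) < A - 1)]
      have h9 : ε * (9 / ε) = 9 := by field_simp
      nlinarith [mul_lt_mul_of_pos_left (by linarith : 9 / ε + 1 < A - 1) hε]
    linarith
  · intro ε hε
    refine ⟨1 - (max 8 (2 / ε + 1)) / lam, ?_⟩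
    intro s hs
    set M := max 8 (2 / ε + 1) with hMdef
    have hM8 : (8 : ℝ) ≤ M := le_max_left _ _
    have hMε : 2 / ε + 1 ≤ M := le_max_right _ _
    have hlamr : M < lam * (1 - s.re) := by
      have h1 : M / lam < 1 - s.re := by linarith
      calc M = lam * (M / lam) := by field_simp
        _ < lam * (1 - s.re) := by exact mul_lt_mul_of_pos_left h1 hlam
    set A := Real.exp (lam * ((1 : ℝ) - s.re)) with hAdef
    have hAe : lam * (1 - s.re) + 1 ≤ A := Real.add_one_le_exp _
    have hA9 : M + 1 < A := by linarith
    have hP : Real.exp 2 ≤ A := by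
      have := e2_le9
      linarith
    have hβ := (exists_lim lam hlam s).choose_spec
    have hlim : Tendsto (fun n => ‖Phi n s (lam : ℂ)‖) atTop
        (𝓝 ‖(exists_lim lam hlam s).choose‖) := hβ.norm
    have hle : ‖(exists_lim lam hlam s).choose‖ ≤ 2 / (A - 1) := by
      refine le_of_tendsto hlim ?_
      filter_upwards [eventually_ge_atTop 1] with n hn
      obtain ⟨m, rfl⟩ : ∃ m, n = m + 1 := ⟨n - 1, by omega⟩
      exact (phi_tail_bounds s lam hlam hP m).2
    have hfin : 2 / (A - 1) < ε := by
      rw [div_lt_iff₀ (by linarith : (0 : ℝ) < A - 1)]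
      have h2 : ε * (2 / ε) = 2 := by field_simp
      nlinarith [mul_lt_mul_of_pos_left (by linarith : 2 / ε + 1 < A - 1) hε]
    linarith
end

section
/- Fix λ ∈ ℂ with Re λ > 0 and T₀ ∈ ℝ. Let β : ℂ → ℂ be holomorphic on the half-plane {s : Re s > T₀}, satisfy β(s+1)(1 + e^{−λs}) = e^{β(s)} for all Re s > T₀, and diverge uniformly to infinity: for every M > 0 there exists T' such that |β(s)| ≥ M whenever Re s > T'. Define τ⁰(s) = 0 and τ^{n+1}(s) = Log(1 + τⁿ(s+1)/β(s+1)) − Log(1 + e^{−λs}), where Log is the principal branch of the complex logarithm. Then for every q with e^{−Re λ} < q < 1 there exist T ≥ T₀ and D ≥ 1 such that for all n ≥ 1 and all s with Re s > T: |τⁿ(s) + Log(1 + e^{−λs})| ≤ D · |e^{−λs}| · ∑_{j=1}^{n−1} q^j / ∏_{k=1}^{j} |β(s+k)|. -/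
open Complex Filter Topology

noncomputable def tauSeq (lam : ℂ) (β : ℂ → ℂ) : ℕ → ℂ → ℂ
  | 0, _ => 0
  | n + 1, s => Complex.log (1 + tauSeq lam β n (s + 1) / β (s + 1)) -
      Complex.log (1 + Complex.exp (-lam * s))

open Finset in
private lemma geom_half_sum (m : ℕ) : ∑ j ∈ Icc 1 m, ((2:ℝ)⁻¹) ^ j ≤ 1 := by
  have h : ∀ m : ℕ, ∑ j ∈ Icc 1 m, ((2:ℝ)⁻¹) ^ j = 1 - (2:ℝ)⁻¹ ^ m := by
    intro m
    induction m with
    | zero => simp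
    | succ k ih =>
      rw [Finset.sum_Icc_succ_top (by omega), ih]
      ring
  rw [h]
  have : (0:ℝ) ≤ (2:ℝ)⁻¹ ^ m := by positivity
  linarith

open Finset in
private lemma prod_split (w : ℕ → ℝ) (m : ℕ) :
    ∏ k ∈ Icc 1 (m + 1), w k = w 1 * ∏ k ∈ Icc 1 m, w (k + 1) := by
  induction m with
  | zero => simp
  | succ k ih =>
    rw [Finset.prod_Icc_succ_top (by omega), ih,
      Finset.prod_Icc_succ_top (by omega : 1 ≤ k + 1)]
    ring

open Finset in
private lemma sum_key (q : ℝ) (w : ℕ → ℝ) (n : ℕ) :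
    ∑ j ∈ Icc 1 (n + 1), q ^ j / ∏ k ∈ Icc 1 j, w k
      = q / w 1 * (1 + ∑ j ∈ Icc 1 n, q ^ j / ∏ k ∈ Icc 1 j, w (k + 1)) := by
  induction n with
  | zero => simp
  | succ m ih =>
    rw [Finset.sum_Icc_succ_top (by omega : 1 ≤ m + 1 + 1), ih,
      Finset.sum_Icc_succ_top (by omega : 1 ≤ m + 1), prod_split]
    have h : q ^ (m + 1 + 1) / (w 1 * ∏ k ∈ Icc 1 (m + 1), w (k + 1))
        = q / w 1 * (q ^ (m + 1) / ∏ k ∈ Icc 1 (m + 1), w (k + 1)) := by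
      rw [div_mul_div_comm, ← pow_succ']
    rw [h]; ring

private lemma log_le (δ : ℝ) (hδ : δ ≤ 1/2) {z : ℂ} (hz : ‖z‖ ≤ δ) :
    ‖Complex.log (1 + z)‖ ≤ (1 + δ) * ‖z‖ := by
  have h1 : ‖z‖ < 1 := lt_of_le_of_lt (hz.trans hδ) (by norm_num)
  have h2 := Complex.norm_log_one_add_le h1
  have h4 : (0:ℝ) < 1 - ‖z‖ := by linarith
  have h3 : (1 - ‖z‖)⁻¹ ≤ 2 := by
    rw [inv_le_comm₀ h4 (by norm_num)]
    have := hz.trans hδ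
    linarith
  nlinarith [norm_nonneg z, mul_le_mul_of_nonneg_left hz (norm_nonneg z),
    sq_nonneg ‖z‖, inv_nonneg.mpr h4.le]

/-- Removable Singularity Theorem: explicit bound on the error terms. -/
theorem tau_removable_singularity_bound
    (lam : ℂ) (hlam : 0 < lam.re) (T₀ : ℝ) (β : ℂ → ℂ)
    (hβ : DifferentiableOn ℂ β {s : ℂ | T₀ < s.re})
    (hfe : ∀ s : ℂ, T₀ < s.re →
      β (s + 1) * (1 + Complex.exp (-lam * s)) = Complex.exp (β s))
    (hdiv : ∀ M : ℝ, 0 < M → ∃ T' : ℝ, ∀ s : ℂ, T' < s.re → M ≤ ‖β s‖) :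
    ∀ q : ℝ, Real.exp (-lam.re) < q → q < 1 →
      ∃ T : ℝ, T₀ ≤ T ∧ ∃ D : ℝ, 1 ≤ D ∧
        ∀ n : ℕ, 1 ≤ n → ∀ s : ℂ, T < s.re →
          ‖tauSeq lam β n s + Complex.log (1 + Complex.exp (-lam * s))‖ ≤
            D * ‖Complex.exp (-lam * s)‖ *
              ∑ j ∈ Finset.Icc 1 (n - 1),
                q ^ j / ∏ k ∈ Finset.Icc 1 j, ‖β (s + (k : ℂ))‖ := by
  intro q hq1 hq2
  by_cases him : lam.im = 0
  case neg =>
    exfalso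
    have hlam0 : lam ≠ 0 := fun h => by simp [h] at hlam
    have hN : 0 < Complex.normSq lam := Complex.normSq_pos.mpr hlam0
    set N := Complex.normSq lam with hNdef
    have hb : 0 < |lam.im| := abs_pos.mpr him
    have hπb : 0 < Real.pi * |lam.im| := by positivity
    obtain ⟨nn, hnn⟩ := exists_nat_gt (T₀ * N / (Real.pi * |lam.im|))
    set m : ℤ := if 0 < lam.im then -(2 * (nn : ℤ) + 1) else 2 * (nn : ℤ) + 1 with hm
    have hmodd : Odd m := by
      rcases lt_or_ge 0 lam.im with h | h
      · rw [hm, if_pos h]; exact ⟨-(nn:ℤ) - 1, by ring⟩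
      · rw [hm, if_neg (not_lt.mpr h)]; exact ⟨nn, by ring⟩
    have hmb : (m : ℝ) * lam.im = -((2 * nn + 1) * |lam.im|) := by
      rcases lt_or_ge 0 lam.im with h | h
      · rw [hm, if_pos h, abs_of_pos h]; push_cast; ring
      · have h' : lam.im < 0 := lt_of_le_of_ne h him
        rw [hm, if_neg (not_lt.mpr h), abs_of_neg h']; push_cast; ring
    set s₀ : ℂ := ((m : ℂ) * Real.pi * Complex.I) / (-lam) with hs₀
    have hre : s₀.re = (2 * nn + 1) * |lam.im| * Real.pi / N := by
      rw [hs₀, Complex.div_re]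
      simp [Complex.normSq_neg]
      rw [← hNdef,
        show -((m:ℝ) * Real.pi * lam.im) = ((m:ℝ) * lam.im) * (-Real.pi) by ring, hmb]
      ring
    have hT : T₀ < s₀.re := by
      rw [hre, lt_div_iff₀ hN]
      have h1 : T₀ * N < nn * (Real.pi * |lam.im|) := (div_lt_iff₀ hπb).mp hnn
      nlinarith [hπb, hN]
    have hexp : Complex.exp (-lam * s₀) = -1 := by
      have h1 : -lam * s₀ = (m : ℂ) * (Real.pi * Complex.I) := by
        rw [hs₀]
        field_simp
      rw [h1, Complex.exp_int_mul, Complex.exp_pi_mul_I, hmodd.neg_one_zpow]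
    have := hfe s₀ hT
    rw [hexp] at this
    simp at this
    exact Complex.exp_ne_zero _ this.symm
  case pos =>
    set a := lam.re with ha_def
    have ha : 0 < a := hlam
    have hq0 : 0 < q := lt_trans (Real.exp_pos _) hq1
    have hεnorm : ∀ s : ℂ, ‖Complex.exp (-lam * s)‖ = Real.exp (-(a * s.re)) := by
      intro s
      rw [Complex.norm_exp]
      congr 1
      simp [Complex.mul_re, him, ha_def]
    have hmul : Real.exp a * Real.exp (-a) = 1 := by
      rw [← Real.exp_add]; simp
    have hqe : 1 < q * Real.exp a := by nlinarith [Real.exp_pos a, Real.exp_pos (-a)]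
    set μ : ℝ := (q * Real.exp a + 1) / 2 with hμdef
    have hμ1 : 1 < μ := by rw [hμdef]; linarith
    have hμ0 : 0 < μ := lt_trans one_pos hμ1
    have hc : μ * Real.exp (-a) < q := by
      rw [hμdef]
      nlinarith [Real.exp_pos (-a), hq1]
    have he1 : Real.exp (-a) ≤ 1 := Real.exp_le_one_iff.mpr (by linarith)
    set δ : ℝ := min (μ - 1) (1/2) with hδdef
    have hδpos : 0 < δ := lt_min (by linarith) (by norm_num)
    have hδhalf : δ ≤ 1/2 := min_le_right _ _
    have hδμ : 1 + δ ≤ μ := by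
      have := min_le_left (μ - 1) (1/2)
      rw [hδdef]; linarith [min_le_left (μ - 1) (1/2)]
    set D : ℝ := max 1 (μ^2 / q) with hDdef
    have hD1 : (1:ℝ) ≤ D := le_max_left _ _
    have hD0 : (0:ℝ) < D := lt_of_lt_of_le one_pos hD1
    have hDq : μ^2 ≤ q * D := by
      have h1 : μ^2 / q ≤ D := le_max_right _ _
      calc μ^2 = q * (μ^2 / q) := by field_simp
        _ ≤ q * D := by nlinarith
    set εS : ℝ := min δ (2*δ/(D+μ)) with hεSdef
    have hεS0 : 0 < εS := lt_min hδpos (by positivity)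
    obtain ⟨T₁, hT₁⟩ := hdiv 2 (by norm_num)
    set T : ℝ := max (max T₀ T₁) (-Real.log εS / a) with hTdef
    refine ⟨T, le_trans (le_max_left _ _) (le_max_left _ _), D, hD1, ?_⟩
    have hεsmall : ∀ s : ℂ, T < s.re → ‖Complex.exp (-lam * s)‖ ≤ εS := by
      intro s hs
      rw [hεnorm]
      have h1 : -Real.log εS / a < s.re :=
        lt_of_le_of_lt (le_trans (le_max_right _ _) le_rfl) hs
      have h2 : -Real.log εS < s.re * a := (div_lt_iff₀ ha).mp h1
      calc Real.exp (-(a * s.re)) ≤ Real.exp (Real.log εS) :=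
            Real.exp_le_exp.mpr (by linarith)
        _ = εS := Real.exp_log hεS0
    have hβ2 : ∀ s : ℂ, T < s.re → 2 ≤ ‖β s‖ := fun s hs =>
      hT₁ s (lt_of_le_of_lt (le_trans (le_max_right _ _) (le_max_left _ _)) hs)
    clear_value a μ δ D εS T
    intro n hn
    induction n, hn using Nat.le_induction with
    | base =>
      intro s hs
      have h0 : tauSeq lam β 1 s + Complex.log (1 + Complex.exp (-lam * s)) = 0 := by
        show (Complex.log (1 + tauSeq lam β 0 (s + 1) / β (s + 1)) -
          Complex.log (1 + Complex.exp (-lam * s))) + _ = 0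
        simp [tauSeq]
      rw [h0]
      have : Finset.Icc 1 (1 - 1) = (∅ : Finset ℕ) := by simp
      rw [this]
      simp
    | succ n hn ih =>
      intro s hs
      have hs1 : T < (s + 1).re := by simp; linarith
      have hεs1 : ‖Complex.exp (-lam * (s + 1))‖ ≤ εS := hεsmall (s + 1) hs1
      have hεdecomp : ‖Complex.exp (-lam * (s + 1))‖
          = Real.exp (-a) * ‖Complex.exp (-lam * s)‖ := by
        rw [hεnorm, hεnorm, ← Real.exp_add]
        congr 1
        simp
        ring
      set εs := ‖Complex.exp (-lam * s)‖ with hεsdef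
      set εs1 := ‖Complex.exp (-lam * (s + 1))‖ with hεs1def
      have hεs0 : 0 ≤ εs := norm_nonneg _
      have hεs10 : 0 ≤ εs1 := norm_nonneg _
      set S : ℝ := ∑ j ∈ Finset.Icc 1 (n - 1),
          q ^ j / ∏ k ∈ Finset.Icc 1 j, ‖β (s + 1 + (k : ℂ))‖ with hSdef
      have hIH := ih (s + 1) hs1
      rw [← hεs1def, ← hSdef] at hIH
      clear_value S εs εs1
      have hβpt : ∀ x : ℂ, T < x.re → 2 ≤ ‖β x‖ := hβ2
      have hS0 : 0 ≤ S := by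
        rw [hSdef]
        apply Finset.sum_nonneg
        intro j _
        apply div_nonneg (pow_nonneg hq0.le _)
        exact Finset.prod_nonneg fun k _ => norm_nonneg _
      have hS1 : S ≤ 1 := by
        rw [hSdef]
        refine le_trans (Finset.sum_le_sum ?_) (geom_half_sum (n - 1))
        intro j hj
        have hj1 : 1 ≤ j := (Finset.mem_Icc.mp hj).1
        have hprod : (2:ℝ)^j ≤ ∏ k ∈ Finset.Icc 1 j, ‖β (s + 1 + (k : ℂ))‖ := by
          calc (2:ℝ)^j = ∏ _k ∈ Finset.Icc 1 j, (2:ℝ) := by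
                rw [Finset.prod_const, Nat.card_Icc]
                norm_num
            _ ≤ _ := by
                apply Finset.prod_le_prod (fun _ _ => by norm_num)
                intro k hk
                apply hβpt
                have : (s + 1 + (k:ℂ)).re = s.re + 1 + k := by simp
                rw [this]
                have : (0:ℝ) ≤ (k:ℝ) := Nat.cast_nonneg k
                linarith
        calc q ^ j / ∏ k ∈ Finset.Icc 1 j, ‖β (s + 1 + (k : ℂ))‖
            ≤ 1 / (2:ℝ)^j := by
              apply div_le_div₀ (by norm_num) (pow_le_one₀ hq0.le hq2.le)
                (by positivity) hprod
          _ = ((2:ℝ)⁻¹)^j := by rw [one_div, inv_pow]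
      have hL1 : ‖Complex.log (1 + Complex.exp (-lam * (s + 1)))‖ ≤ μ * εs1 := by
        have h1 : ‖Complex.exp (-lam * (s + 1))‖ ≤ δ := by
          rw [← hεs1def]
          exact le_trans hεs1 (by rw [hεSdef]; exact min_le_left _ _)
        rw [hεs1def]
        exact le_trans (log_le δ hδhalf h1)
          (mul_le_mul_of_nonneg_right hδμ (norm_nonneg _))
      have hτ : ‖tauSeq lam β n (s + 1)‖ ≤ (D * S + μ) * εs1 := by
        have h1 : tauSeq lam β n (s + 1) =
            (tauSeq lam β n (s + 1) + Complex.log (1 + Complex.exp (-lam * (s + 1)))) -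
            Complex.log (1 + Complex.exp (-lam * (s + 1))) := by ring
        rw [h1]
        refine le_trans (norm_sub_le _ _) ?_
        have hr : (D * S + μ) * εs1 = D * εs1 * S + μ * εs1 := by ring
        rw [hr]
        linarith [hIH, hL1]
      have hβs1 : 2 ≤ ‖β (s + 1)‖ := hβ2 (s + 1) hs1
      have hβs1' : (0:ℝ) < ‖β (s + 1)‖ := by linarith
      have hDSμ : D * S + μ ≤ D + μ := by
        have h := mul_le_mul_of_nonneg_left hS1 hD0.le
        rw [mul_one] at h
        linarith
      have hz : ‖tauSeq lam β n (s + 1) / β (s + 1)‖ ≤ δ := by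
        rw [norm_div]
        have h1 : ‖tauSeq lam β n (s + 1)‖ / ‖β (s + 1)‖ ≤ (D * S + μ) * εs1 / 2 :=
          div_le_div₀ (by positivity) hτ (by norm_num) hβs1
        have h2 : εs1 ≤ 2 * δ / (D + μ) := le_trans hεs1 (by rw [hεSdef]; exact min_le_right _ _)
        have h3 : (D * S + μ) * εs1 ≤ (D + μ) * (2 * δ / (D + μ)) :=
          mul_le_mul hDSμ h2 hεs10 (by linarith)
        have h4 : (D + μ) * (2 * δ / (D + μ)) = 2 * δ := by
          field_simp
        linarith
      have heq : tauSeq lam β (n + 1) s + Complex.log (1 + Complex.exp (-lam * s)) =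
          Complex.log (1 + tauSeq lam β n (s + 1) / β (s + 1)) := by
        simp only [tauSeq]
        ring
      rw [heq]
      -- rewrite the RHS sum
      have hsum : ∑ j ∈ Finset.Icc 1 ((n + 1) - 1),
          q ^ j / ∏ k ∈ Finset.Icc 1 j, ‖β (s + (k : ℂ))‖
          = q / ‖β (s + 1)‖ * (1 + S) := by
        rw [show (n + 1) - 1 = (n - 1) + 1 by omega]
        rw [sum_key q (fun k => ‖β (s + (k : ℂ))‖) (n - 1)]
        congr 2
        · norm_num
        · rw [hSdef]
          apply Finset.sum_congr rfl
          intro j _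
          congr 1
          apply Finset.prod_congr rfl
          intro k _
          congr 2
          push_cast
          ring
      rw [hsum]
      -- main chain
      have key : μ * Real.exp (-a) * (D * S + μ) ≤ q * (D * (1 + S)) := by
        have hint1 := mul_le_mul_of_nonneg_right hc.le (mul_nonneg hD0.le hS0)
        have h2' : μ^2 * Real.exp (-a) ≤ μ^2 := by
          have h := mul_le_mul_of_nonneg_left he1 (sq_nonneg μ)
          rwa [mul_one] at h
        have e1 : μ * Real.exp (-a) * (D * S + μ)
            = μ * Real.exp (-a) * (D * S) + μ^2 * Real.exp (-a) := by ring
        have e2 : q * (D * (1 + S)) = q * (D * S) + q * D := by ring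
        rw [e1, e2]
        linarith
      calc ‖Complex.log (1 + tauSeq lam β n (s + 1) / β (s + 1))‖
          ≤ (1 + δ) * ‖tauSeq lam β n (s + 1) / β (s + 1)‖ := log_le δ hδhalf hz
        _ ≤ μ * ‖tauSeq lam β n (s + 1) / β (s + 1)‖ :=
            mul_le_mul_of_nonneg_right hδμ (norm_nonneg _)
        _ = μ * ‖tauSeq lam β n (s + 1)‖ / ‖β (s + 1)‖ := by
            rw [norm_div]; ring
        _ ≤ μ * ((D * S + μ) * εs1) / ‖β (s + 1)‖ := by
            have hDSμ0 : (0:ℝ) ≤ D * S + μ := by linarith [mul_nonneg hD0.le hS0]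
            refine div_le_div₀ ?_ ?_ hβs1' le_rfl
            · exact mul_nonneg hμ0.le (mul_nonneg hDSμ0 hεs10)
            · exact mul_le_mul_of_nonneg_left hτ hμ0.le
        _ ≤ D * εs * (q / ‖β (s + 1)‖ * (1 + S)) := by
            rw [show D * εs * (q / ‖β (s + 1)‖ * (1 + S))
                = (D * εs * (q * (1 + S))) / ‖β (s + 1)‖ by ring]
            refine div_le_div₀ ?_ ?_ hβs1' le_rfl
            · exact mul_nonneg (mul_nonneg hD0.le hεs0)
                (mul_nonneg hq0.le (by linarith : (0:ℝ) ≤ 1 + S))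
            · rw [hεdecomp]
              have h := mul_le_mul_of_nonneg_right key hεs0
              have e3 : μ * ((D * S + μ) * (Real.exp (-a) * εs))
                  = μ * Real.exp (-a) * (D * S + μ) * εs := by ring
              have e4 : D * εs * (q * (1 + S)) = q * (D * (1 + S)) * εs := by ring
              rw [e3, e4]
              exact h
end

section
/- Fix a real number λ > 0. Then there exists a sequence (a_k)_{k≥1} of complex numbers such that for every s ∈ ℂ with Re s < 1 the limit β(s,λ) = lim_{n→∞} Φ_n(s,λ) exists and the series ∑_{k=1}^∞ a_k e^{kλs}/k! converges absolutely with β(s,λ) = ∑_{k=1}^∞ a_k e^{kλs}/k!. -/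
open Complex Filter Topology
open scoped NNReal ENNReal

/-- The nested map as a function of `x = exp(λ s)`. -/
noncomputable def Gnest (lam : ℝ) (x : ℂ) : ℕ → ℕ → ℂ
  | _, 0 => 0
  | j, k + 1 => x * Complex.exp (Gnest lam x (j + 1) k) /
      (Complex.exp ((lam : ℂ) * (j : ℂ)) + x)

lemma qnest_eq_Gnest (lam : ℝ) (s : ℂ) (j k : ℕ) :
    qnest s (lam : ℂ) j k = Gnest lam (Complex.exp ((lam : ℂ) * s)) j k := by
  induction k generalizing j with
  | zero => rfl
  | succ k ih =>
    rw [qnest, Gnest, ih]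
    have hx : Complex.exp ((lam : ℂ) * s) ≠ 0 := Complex.exp_ne_zero _
    have h1 : Complex.exp ((lam : ℂ) * ((j : ℂ) - s))
        = Complex.exp ((lam : ℂ) * (j : ℂ)) / Complex.exp ((lam : ℂ) * s) := by
      rw [mul_sub, Complex.exp_sub]
    rw [h1, div_add_one hx, div_div_eq_mul_div, mul_comm]

lemma Gnest_zero (lam : ℝ) (j k : ℕ) : Gnest lam 0 j k = 0 := by
  cases k with
  | zero => rfl
  | succ k => rw [Gnest]; simp

lemma norm_exp_le (z : ℂ) : ‖Complex.exp z‖ ≤ Real.exp ‖z‖ := by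
  rw [Complex.norm_exp]
  exact Real.exp_le_exp.2 ((Complex.re_le_norm z).trans (le_of_eq rfl))

lemma norm_exp_sub_exp_le {A B : ℂ} {M : ℝ} (hA : ‖A‖ ≤ M) (hB : ‖B‖ ≤ M) :
    ‖Complex.exp A - Complex.exp B‖ ≤ Real.exp (3 * M) * ‖A - B‖ := by
  have hM : 0 ≤ M := le_trans (norm_nonneg _) hA
  have key : ∀ t ∈ Set.Icc (0:ℝ) 1,
      HasDerivWithinAt (fun t : ℝ => Complex.exp (B + (t : ℂ) * (A - B)))
        ((A - B) * Complex.exp (B + (t : ℂ) * (A - B))) (Set.Icc 0 1) t := by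
    intro t _
    have h0 : HasDerivWithinAt (fun t : ℝ => B + (t : ℂ) * (A - B)) (A - B) (Set.Icc 0 1) t := by
      have := ((Complex.ofRealCLM.hasDerivAt (x := t)).mul_const (A - B)).const_add B
      simpa using this.hasDerivWithinAt
    simpa [mul_comm] using h0.cexp
  have hbound : ∀ t ∈ Set.Icc (0:ℝ) 1,
      ‖(A - B) * Complex.exp (B + (t : ℂ) * (A - B))‖ ≤ Real.exp (3 * M) * ‖A - B‖ := by
    intro t ht
    rw [norm_mul, mul_comm]
    apply mul_le_mul_of_nonneg_right _ (norm_nonneg _)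
    refine (norm_exp_le _).trans (Real.exp_le_exp.2 ?_)
    calc ‖B + (t : ℂ) * (A - B)‖ ≤ ‖B‖ + ‖(t : ℂ)‖ * ‖A - B‖ := by
          refine (norm_add_le _ _).trans ?_; rw [norm_mul]
      _ ≤ M + 1 * (‖A‖ + ‖B‖) := by
          refine add_le_add hB (mul_le_mul ?_ (norm_sub_le _ _) (norm_nonneg _) one_pos.le)
          rw [Complex.norm_real, Real.norm_eq_abs, _root_.abs_of_nonneg ht.1]; exact ht.2
      _ ≤ 3 * M := by linarith [hA, hB]
  have := (convex_Icc (0:ℝ) 1).norm_image_sub_le_of_norm_hasDerivWithin_le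
    key hbound (Set.left_mem_Icc.2 one_pos.le) (Set.right_mem_Icc.2 one_pos.le)
  simpa using this

noncomputable def Bnd (lam r : ℝ) : ℕ → ℝ
  | 0 => 1
  | m + 1 => max (Bnd lam r m) (r * Real.exp (Bnd lam r m) / (Real.exp lam - r))

lemma one_le_Bnd (lam r : ℝ) : ∀ m, 1 ≤ Bnd lam r m
  | 0 => le_refl 1
  | m + 1 => le_trans (one_le_Bnd lam r m) (le_max_left _ _)

lemma Bnd_mono (lam r : ℝ) : Monotone (Bnd lam r) :=
  monotone_nat_of_le_succ fun m => le_max_left _ _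

lemma key_bound (lam : ℝ) (hlam : 0 < lam) (r : ℝ) (hr0 : 0 ≤ r) (hre : r < Real.exp lam) :
    ∃ C : ℝ, 0 ≤ C ∧ ∀ x : ℂ, ‖x‖ ≤ r → ∀ n : ℕ,
      ‖Gnest lam x 1 (n + 1) - Gnest lam x 1 n‖ ≤ C * (1 / 2) ^ n := by
  -- basic facts about the denominators
  have hexp_mono : ∀ j : ℕ, 1 ≤ j → Real.exp lam ≤ Real.exp (lam * j) := by
    intro j hj
    apply Real.exp_le_exp.2
    have h1 : (1:ℝ) ≤ (j:ℝ) := by exact_mod_cast hj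
    nlinarith
  have hEnorm : ∀ j : ℕ, ‖Complex.exp ((lam : ℂ) * (j : ℂ))‖ = Real.exp (lam * j) := by
    intro j
    rw [Complex.norm_exp]
    norm_num
  have hden : ∀ j : ℕ, 1 ≤ j → ∀ x : ℂ, ‖x‖ ≤ r →
      Real.exp (lam * j) - r ≤ ‖Complex.exp ((lam : ℂ) * (j : ℂ)) + x‖ := by
    intro j hj x hx
    calc Real.exp (lam * j) - r ≤ ‖Complex.exp ((lam : ℂ) * (j : ℂ))‖ - ‖-x‖ := by
          rw [hEnorm, norm_neg]; linarith
      _ ≤ ‖Complex.exp ((lam : ℂ) * (j : ℂ)) - -x‖ := norm_sub_norm_le _ _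
      _ = ‖Complex.exp ((lam : ℂ) * (j : ℂ)) + x‖ := by rw [sub_neg_eq_add]
  have hdpos : ∀ j : ℕ, 1 ≤ j → 0 < Real.exp (lam * j) - r := by
    intro j hj; have := hexp_mono j hj; linarith
  -- the key one-step estimate
  have hstep : ∀ j : ℕ, 1 ≤ j → ∀ x : ℂ, ‖x‖ ≤ r → ∀ z w : ℂ,
      ‖x * z / (Complex.exp ((lam : ℂ) * (j : ℂ)) + x)‖ ≤ r * ‖z‖ / (Real.exp (lam * j) - r) := by
    intro j hj x hx z w
    rw [norm_div, norm_mul]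
    exact div_le_div₀ (by positivity)
      (mul_le_mul_of_nonneg_right hx (norm_nonneg _)) (hdpos j hj) (hden j hj x hx)
  -- choose J beyond which everything is tame
  obtain ⟨J0, hJ0⟩ : ∃ J0 : ℕ, ∀ j ≥ J0, r * Real.exp 1 + r + 1 ≤ Real.exp (lam * j) := by
    have h1 : Tendsto (fun j : ℕ => Real.exp (lam * j)) atTop atTop :=
      Real.tendsto_exp_atTop.comp (Tendsto.const_mul_atTop hlam tendsto_natCast_atTop_atTop)
    exact (h1.eventually_ge_atTop _).exists_forall_of_atTop
  set J := max J0 1 with hJdef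
  have hJ1 : 1 ≤ J := le_max_right _ _
  have hJ : ∀ j : ℕ, J ≤ j → r * Real.exp 1 + r + 1 ≤ Real.exp (lam * j) :=
    fun j hj => hJ0 j (le_trans (le_max_left _ _) hj)
  -- uniform bound on all levels
  have hB : ∀ x : ℂ, ‖x‖ ≤ r → ∀ k j, 1 ≤ j → ‖Gnest lam x j k‖ ≤ Bnd lam r (J - j) := by
    intro x hx k
    induction k with
    | zero =>
      intro j hj; rw [Gnest]; simp
      exact zero_le_one.trans (one_le_Bnd lam r _)
    | succ k ih =>
      intro j hj
      rw [Gnest]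
      have h1 := hstep j hj x hx (Complex.exp (Gnest lam x (j + 1) k)) 0
      refine h1.trans ?_
      have hA : ‖Gnest lam x (j + 1) k‖ ≤ Bnd lam r (J - (j + 1)) := ih (j + 1) (by omega)
      have hexpA : ‖Complex.exp (Gnest lam x (j + 1) k)‖ ≤ Real.exp (Bnd lam r (J - (j + 1))) :=
        (norm_exp_le _).trans (Real.exp_le_exp.2 hA)
      by_cases hcase : J ≤ j
      · -- tame region
        have hJj : J - (j + 1) = 0 := by omega
        have hJj2 : J - j = 0 := by omega
        rw [hJj] at hexpA
        rw [hJj2]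
        have h3 : r * Real.exp 1 + r + 1 ≤ Real.exp (lam * j) := hJ j hcase
        have h4 : Bnd lam r 0 = (1:ℝ) := rfl
        rw [h4] at hexpA ⊢
        rw [div_le_one (hdpos j hj)]
        calc r * ‖Complex.exp (Gnest lam x (j + 1) k)‖ ≤ r * Real.exp 1 :=
              mul_le_mul_of_nonneg_left hexpA hr0
          _ ≤ Real.exp (lam * j) - r := by linarith
      · -- descending region
        have hJj : J - j = (J - (j + 1)) + 1 := by omega
        rw [hJj, Bnd]
        refine le_trans ?_ (le_max_right _ _)
        refine div_le_div₀ (by positivity)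
          (mul_le_mul_of_nonneg_left hexpA hr0) (by linarith) ?_
        have := hexp_mono j hj; linarith
  -- the global bound
  set Cb := Bnd lam r J with hCbdef
  have hCb1 : 1 ≤ Cb := one_le_Bnd lam r J
  have hCb : ∀ x : ℂ, ‖x‖ ≤ r → ∀ k j, 1 ≤ j → ‖Gnest lam x j k‖ ≤ Cb :=
    fun x hx k j hj => (hB x hx k j hj).trans (Bnd_mono lam r (Nat.sub_le J j))
  -- the contraction factors
  set L : ℕ → ℝ := fun j => r * Real.exp (3 * Cb) / (Real.exp (lam * j) - r) with hLdef
  have hLnn : ∀ j : ℕ, 1 ≤ j → 0 ≤ L j := by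
    intro j hj
    have := hdpos j hj
    positivity
  -- difference estimate
  have hD : ∀ x : ℂ, ‖x‖ ≤ r → ∀ k j, 1 ≤ j →
      ‖Gnest lam x j (k + 1) - Gnest lam x j k‖ ≤ Cb * ∏ i ∈ Finset.Ico j (j + k), L i := by
    intro x hx k
    induction k with
    | zero =>
      intro j hj
      simp only [Nat.add_zero, Finset.Ico_self, Finset.prod_empty, mul_one]
      rw [show Gnest lam x j 0 = 0 from rfl, sub_zero]
      exact hCb x hx 1 j hj
    | succ k ih =>
      intro j hj
      set A := Gnest lam x (j + 1) (k + 1) with hA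
      set B := Gnest lam x (j + 1) k with hBk
      have hdiff : Gnest lam x j (k + 2) - Gnest lam x j (k + 1)
          = x * (Complex.exp A - Complex.exp B) / (Complex.exp ((lam : ℂ) * (j : ℂ)) + x) := by
        rw [show Gnest lam x j (k + 2)
            = x * Complex.exp A / (Complex.exp ((lam : ℂ) * (j : ℂ)) + x) from rfl,
          show Gnest lam x j (k + 1)
            = x * Complex.exp B / (Complex.exp ((lam : ℂ) * (j : ℂ)) + x) from rfl,
          div_sub_div_same, mul_sub]
      rw [hdiff]
      have hnA : ‖A‖ ≤ Cb := hCb x hx (k + 1) (j + 1) (by omega)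
      have hnB : ‖B‖ ≤ Cb := hCb x hx k (j + 1) (by omega)
      have hexpAB : ‖Complex.exp A - Complex.exp B‖ ≤ Real.exp (3 * Cb) * ‖A - B‖ :=
        norm_exp_sub_exp_le hnA hnB
      have h1 := hstep j hj x hx (Complex.exp A - Complex.exp B) 0
      refine h1.trans ?_
      have h2 : r * ‖Complex.exp A - Complex.exp B‖ / (Real.exp (lam * j) - r)
          ≤ L j * ‖A - B‖ := by
        show r * ‖Complex.exp A - Complex.exp B‖ / (Real.exp (lam * j) - r)
          ≤ r * Real.exp (3 * Cb) / (Real.exp (lam * j) - r) * ‖A - B‖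
        rw [div_mul_eq_mul_div]
        refine div_le_div₀ (by positivity) ?_ (hdpos j hj) le_rfl
        calc r * ‖Complex.exp A - Complex.exp B‖ ≤ r * (Real.exp (3 * Cb) * ‖A - B‖) :=
              mul_le_mul_of_nonneg_left hexpAB hr0
          _ = r * Real.exp (3 * Cb) * ‖A - B‖ := by ring
      refine h2.trans ?_
      have h3 : ‖A - B‖ ≤ Cb * ∏ i ∈ Finset.Ico (j + 1) (j + 1 + k), L i := ih (j + 1) (by omega)
      calc L j * ‖A - B‖ ≤ L j * (Cb * ∏ i ∈ Finset.Ico (j + 1) (j + 1 + k), L i) :=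
            mul_le_mul_of_nonneg_left h3 (hLnn j hj)
        _ = Cb * (L j * ∏ i ∈ Finset.Ico (j + 1) (j + 1 + k), L i) := by ring
        _ = Cb * ∏ i ∈ Finset.Ico j (j + (k + 1)), L i := by
            congr 1
            rw [show j + (k + 1) = j + 1 + k by omega,
              Finset.prod_eq_prod_Ico_succ_bot (by omega : j < j + 1 + k)]
  -- geometric decay of the products
  set Kb : ℝ := max (r * Real.exp (3 * Cb) / (Real.exp lam - r)) 1 with hKbdef
  have hKb1 : 1 ≤ Kb := le_max_right _ _
  have hKb0 : 0 ≤ Kb := zero_le_one.trans hKb1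
  have hLK : ∀ j : ℕ, 1 ≤ j → L j ≤ Kb := by
    intro j hj
    refine le_trans ?_ (le_max_left _ _)
    exact div_le_div_of_nonneg_left (by positivity) (by linarith) (by
      have := hexp_mono j hj; linarith)
  obtain ⟨J2, hJ2⟩ : ∃ J2 : ℕ, ∀ j ≥ J2, 2 * (r * Real.exp (3 * Cb)) + r ≤ Real.exp (lam * j) := by
    have h1 : Tendsto (fun j : ℕ => Real.exp (lam * j)) atTop atTop :=
      Real.tendsto_exp_atTop.comp (Tendsto.const_mul_atTop hlam tendsto_natCast_atTop_atTop)
    exact (h1.eventually_ge_atTop _).exists_forall_of_atTop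
  have hLhalf : ∀ j : ℕ, 1 ≤ j → J2 ≤ j → L j ≤ 1 / 2 := by
    intro j hj1 hj2
    have h1 := hJ2 j hj2
    show r * Real.exp (3 * Cb) / (Real.exp (lam * j) - r) ≤ 1 / 2
    rw [div_le_div_iff₀ (hdpos j hj1) two_pos]
    nlinarith [Real.exp_pos (3 * Cb), hr0]
  -- the product bound
  have hprod : ∀ k : ℕ, (∏ i ∈ Finset.Ico 1 (1 + k), L i) ≤ Kb ^ J2 * 2 ^ J2 * (1 / 2) ^ k := by
    intro k
    induction k with
    | zero =>
      simp only [Nat.add_zero, Finset.Ico_self, Finset.prod_empty, pow_zero, mul_one]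
      have h1 : (1:ℝ) ≤ Kb ^ J2 := by
        calc (1:ℝ) = 1 ^ J2 := (one_pow J2).symm
        _ ≤ Kb ^ J2 := pow_le_pow_left₀ zero_le_one hKb1 J2
      have h2 : (1:ℝ) ≤ 2 ^ J2 := by
        calc (1:ℝ) = 1 ^ J2 := (one_pow J2).symm
        _ ≤ 2 ^ J2 := pow_le_pow_left₀ zero_le_one one_le_two J2
      nlinarith
    | succ k ih =>
      by_cases hcase : J2 ≤ k + 1
      · rw [show 1 + (k + 1) = (1 + k) + 1 by omega,
          Finset.prod_Ico_succ_top (by omega : 1 ≤ 1 + k)]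
        calc (∏ i ∈ Finset.Ico 1 (1 + k), L i) * L (1 + k)
            ≤ (Kb ^ J2 * 2 ^ J2 * (1 / 2) ^ k) * (1 / 2) := by
              refine mul_le_mul ih (by rw [show 1 + k = k + 1 by omega]; exact hLhalf (k+1) (by omega) hcase) (hLnn (1 + k) (by omega)) ?_
              positivity
          _ = Kb ^ J2 * 2 ^ J2 * (1 / 2) ^ (k + 1) := by ring
      · -- direct bound
        push_neg at hcase
        have hcard : (Finset.Ico 1 (1 + (k + 1))).card = k + 1 := by
          rw [Nat.card_Ico]; omega
        have h1 : (∏ i ∈ Finset.Ico 1 (1 + (k + 1)), L i) ≤ Kb ^ (k + 1) := by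
          have h0 : ∀ i ∈ Finset.Ico 1 (1 + (k + 1)), L i ≤ Kb := by
            intro i hi
            rw [Finset.mem_Ico] at hi
            exact hLK i hi.1
          have h2 : ∀ i ∈ Finset.Ico 1 (1 + (k + 1)), 0 ≤ L i := by
            intro i hi
            rw [Finset.mem_Ico] at hi
            exact hLnn i hi.1
          calc (∏ i ∈ Finset.Ico 1 (1 + (k + 1)), L i)
              ≤ ∏ _i ∈ Finset.Ico 1 (1 + (k + 1)), Kb := Finset.prod_le_prod h2 h0
            _ = Kb ^ (k + 1) := by rw [Finset.prod_const, hcard]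
        refine h1.trans ?_
        have h2 : Kb ^ (k + 1) ≤ Kb ^ J2 := pow_le_pow_right₀ hKb1 (by omega)
        refine h2.trans ?_
        have h3 : (1:ℝ) ≤ 2 ^ J2 * (1 / 2) ^ (k + 1) := by
          have : (2:ℝ) ^ J2 * (1 / 2) ^ (k + 1) = 2 ^ J2 / 2 ^ (k + 1) := by
            rw [div_pow, one_pow, div_eq_mul_inv, mul_comm]; ring
          rw [this, le_div_iff₀ (by positivity), one_mul]
          exact pow_le_pow_right₀ one_le_two (by omega)
        nlinarith [pow_nonneg hKb0 J2, pow_nonneg (by norm_num : (0:ℝ) ≤ 1/2) (k+1), pow_nonneg (by norm_num : (0:ℝ) ≤ 2) J2]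
  -- conclude
  refine ⟨Cb * (Kb ^ J2 * 2 ^ J2), by positivity, ?_⟩
  intro x hx n
  calc ‖Gnest lam x 1 (n + 1) - Gnest lam x 1 n‖
      ≤ Cb * ∏ i ∈ Finset.Ico 1 (1 + n), L i := hD x hx n 1 le_rfl
    _ ≤ Cb * (Kb ^ J2 * 2 ^ J2 * (1 / 2) ^ n) := by
        refine mul_le_mul_of_nonneg_left (hprod n) (by linarith)
    _ = Cb * (Kb ^ J2 * 2 ^ J2) * (1 / 2) ^ n := by ring

lemma norm_exp_real_mul_nat (lam : ℝ) (j : ℕ) :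
    ‖Complex.exp ((lam : ℂ) * (j : ℂ))‖ = Real.exp (lam * j) := by
  rw [Complex.norm_exp]
  norm_num

lemma Gnest_differentiableOn (lam : ℝ) (hlam : 0 < lam) (k : ℕ) :
    ∀ j : ℕ, 1 ≤ j →
      DifferentiableOn ℂ (fun x => Gnest lam x j k) (Metric.ball 0 (Real.exp lam)) := by
  induction k with
  | zero =>
    intro j hj
    show DifferentiableOn ℂ (fun _ => (0 : ℂ)) _
    exact differentiableOn_const 0
  | succ k ih =>
    intro j hj
    have hne : ∀ x ∈ Metric.ball (0 : ℂ) (Real.exp lam),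
        Complex.exp ((lam : ℂ) * (j : ℂ)) + x ≠ 0 := by
      intro x hx h
      rw [Metric.mem_ball, dist_zero_right] at hx
      have h1 : x = -Complex.exp ((lam : ℂ) * (j : ℂ)) := by linear_combination h
      rw [h1, norm_neg, norm_exp_real_mul_nat] at hx
      have h2 : Real.exp lam ≤ Real.exp (lam * j) := by
        apply Real.exp_le_exp.2
        have h3 : (1:ℝ) ≤ (j:ℝ) := by exact_mod_cast hj
        nlinarith
      linarith
    show DifferentiableOn ℂ
      (fun x => x * Complex.exp (Gnest lam x (j + 1) k) /
        (Complex.exp ((lam : ℂ) * (j : ℂ)) + x)) _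
    exact (differentiableOn_id.mul ((ih (j + 1) (by omega)).cexp)).div
      ((differentiableOn_const _).add differentiableOn_id) hne


set_option maxHeartbeats 1000000 in
/-- for real λ > 0 the function β(·, λ) has an exponential series
`β(s,λ) = ∑_{k=1}^∞ a_k e^{kλs}/k!`, absolutely convergent for Re s < 1. -/
theorem beta_exponential_series
    (lam : ℝ) (hlam : 0 < lam) :
    ∃ a : ℕ → ℂ,
      ∀ s : ℂ, s.re < 1 →
        Summable (fun k : ℕ =>
          ‖a (k + 1) * Complex.exp (((k : ℂ) + 1) * (lam : ℂ) * s) / ((Nat.factorial (k + 1) : ℕ) : ℂ)‖) ∧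
        Tendsto (fun n => Phi n s (lam : ℂ)) atTop
          (nhds (∑' k : ℕ,
            a (k + 1) * Complex.exp (((k : ℂ) + 1) * (lam : ℂ) * s) / ((Nat.factorial (k + 1) : ℕ) : ℂ))) := by
  set R := Real.exp lam with hRdef
  have hR0 : 0 < R := Real.exp_pos lam
  set G : ℕ → ℂ → ℂ := fun n x => Gnest lam x 1 n with hGdef
  -- pointwise convergence
  have hcauchy : ∀ x : ℂ, ‖x‖ < R → CauchySeq (fun n => G n x) := by
    intro x hx
    obtain ⟨C, hC0, hC⟩ := key_bound lam hlam ‖x‖ (norm_nonneg x) hx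
    refine cauchySeq_of_le_geometric (1 / 2) C (by norm_num) ?_
    intro n
    rw [dist_eq_norm, norm_sub_rev]
    exact hC x le_rfl n
  set g : ℂ → ℂ := fun x => limUnder atTop (fun n => G n x) with hgdef
  have hglim : ∀ x : ℂ, ‖x‖ < R → Tendsto (fun n => G n x) atTop (𝓝 (g x)) :=
    fun x hx => (hcauchy x hx).tendsto_limUnder
  have hg0 : g 0 = 0 := by
    have h1 : Tendsto (fun n => G n 0) atTop (𝓝 0) := by
      have : ∀ n, G n (0:ℂ) = 0 := fun n => Gnest_zero lam 1 n
      simpa [this] using tendsto_const_nhds (α := ℂ) (f := atTop (α := ℕ))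
    exact tendsto_nhds_unique (hglim 0 (by simpa using hR0)) h1
  -- uniform convergence on closed balls
  have huniform : ∀ r : ℝ, 0 ≤ r → r < R →
      TendstoUniformlyOn G g atTop (Metric.closedBall 0 r) := by
    intro r hr0 hrR
    obtain ⟨C, hC0, hC⟩ := key_bound lam hlam r hr0 hrR
    rw [Metric.tendstoUniformlyOn_iff]
    intro ε hε
    have h1 : Tendsto (fun n : ℕ => C * (1 / 2) ^ n / (1 - 1 / 2)) atTop (𝓝 0) := by
      have h2 := tendsto_pow_atTop_nhds_zero_of_lt_one (by norm_num : (0:ℝ) ≤ 1/2) (by norm_num)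
      have h3 := (h2.const_mul C).div_const (1 - 1/2)
      simpa using h3
    filter_upwards [h1.eventually (gt_mem_nhds hε)] with n hn x hx
    rw [Metric.mem_closedBall, dist_zero_right] at hx
    have h2 : dist (G n x) (g x) ≤ C * (1 / 2) ^ n / (1 - 1 / 2) :=
      dist_le_of_le_geometric_of_tendsto (1 / 2) C (by norm_num)
        (fun m => by rw [dist_eq_norm, norm_sub_rev]; exact hC x hx m)
        (hglim x (lt_of_le_of_lt hx hrR)) n
    rw [dist_comm]
    exact lt_of_le_of_lt h2 hn
  -- differentiability of the limit
  have hGdiff : ∀ n, DifferentiableOn ℂ (G n) (Metric.ball 0 R) :=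
    fun n => Gnest_differentiableOn lam hlam n 1 le_rfl
  have htlu : TendstoLocallyUniformlyOn G g atTop (Metric.ball 0 R) := by
    rw [tendstoLocallyUniformlyOn_iff_forall_isCompact Metric.isOpen_ball]
    intro K hK hKc
    rcases K.eq_empty_or_nonempty with rfl | hne
    · exact tendstoUniformlyOn_empty
    · obtain ⟨x0, hx0K, hx0⟩ := hKc.exists_isMaxOn hne continuous_norm.continuousOn
      have hx0R : ‖x0‖ < R := by
        have := hK hx0K
        rwa [Metric.mem_ball, dist_zero_right] at this
      refine (huniform ‖x0‖ (norm_nonneg _) hx0R).mono ?_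
      intro x hx
      rw [Metric.mem_closedBall, dist_zero_right]
      exact hx0 hx
  have hgdiff : DifferentiableOn ℂ g (Metric.ball 0 R) :=
    htlu.differentiableOn (Filter.Eventually.of_forall hGdiff) Metric.isOpen_ball
  -- power series on balls of any radius < R
  have hps : ∀ r : ℝ≥0, 0 < r → (r : ℝ) < R →
      HasFPowerSeriesOnBall g (cauchyPowerSeries g 0 r) 0 r := by
    intro r hr0 hrR
    refine DifferentiableOn.hasFPowerSeriesOnBall ?_ hr0
    refine hgdiff.mono ?_
    intro x hx
    rw [Metric.mem_closedBall, dist_zero_right] at hx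
    rw [Metric.mem_ball, dist_zero_right]
    exact lt_of_le_of_lt hx hrR
  set R0 : ℝ≥0 := (R / 2).toNNReal with hR0def
  have hR0coe : (R0 : ℝ) = R / 2 := Real.coe_toNNReal _ (by positivity)
  have hpsR0 := hps R0 (by rw [← NNReal.coe_lt_coe, NNReal.coe_zero, hR0coe]; linarith)
    (by rw [hR0coe]; linarith)
  set p := cauchyPowerSeries g 0 R0 with hpdef
  refine ⟨fun k => (Nat.factorial k : ℂ) * p.coeff k, ?_⟩
  intro s hs
  set x := Complex.exp ((lam : ℂ) * s) with hxdef
  have hx : ‖x‖ < R := by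
    rw [hxdef, Complex.norm_exp, hRdef]
    apply Real.exp_lt_exp.2
    have : ((lam : ℂ) * s).re = lam * s.re := by simp [Complex.mul_re]
    rw [this]
    nlinarith
  -- second power series, on a ball containing x
  set r1 : ℝ≥0 := ((‖x‖ + R) / 2).toNNReal with hr1def
  have hr1coe : (r1 : ℝ) = (‖x‖ + R) / 2 := Real.coe_toNNReal _ (by positivity)
  have hr1x : ‖x‖ < (r1 : ℝ) := by rw [hr1coe]; linarith
  have hr1R : (r1 : ℝ) < R := by rw [hr1coe]; linarith
  have hr1pos : 0 < r1 := by
    rw [← NNReal.coe_lt_coe, NNReal.coe_zero]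
    exact lt_of_le_of_lt (norm_nonneg x) hr1x
  have hq := hps r1 hr1pos hr1R
  set q := cauchyPowerSeries g 0 r1 with hqdef
  have hpq : p = q :=
    hpsR0.hasFPowerSeriesAt.eq_formalMultilinearSeries hq.hasFPowerSeriesAt
  have hxmem : x ∈ Metric.eball (0 : ℂ) r1 := by
    rw [mem_eball_zero_iff, enorm_eq_nnnorm, ENNReal.coe_lt_coe]
    exact_mod_cast hr1x
  have hxmem' : x ∈ Metric.eball (0 : ℂ) q.radius := by
    rw [mem_eball_zero_iff] at *
    exact lt_of_lt_of_le hxmem hq.r_le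
  have hsum_norm : Summable (fun n => ‖q n fun _ => x‖) :=
    q.summable_norm_apply hxmem'
  have happ : ∀ n, (q n fun _ => x) = q.coeff n * x ^ n := by
    intro n
    rw [FormalMultilinearSeries.apply_eq_pow_smul_coeff, smul_eq_mul, mul_comm]
  have hhs : HasSum (fun n => q.coeff n * x ^ n) (g x) := by
    have := hq.hasSum hxmem
    rw [zero_add] at this
    exact this.congr_fun (fun n => (happ n).symm)
  have hcoeff0 : q.coeff 0 = 0 := by
    have h1 : (q 0 fun _ => x) = g 0 := by
      have := hq.coeff_zero (fun _ => x)
      simpa using this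
    rw [happ 0] at h1
    simpa [hg0] using h1
  have hshift : HasSum (fun k : ℕ => q.coeff (k + 1) * x ^ (k + 1)) (g x) := by
    refine (hasSum_nat_add_iff (f := fun n => q.coeff n * x ^ n) 1).2 ?_
    have h0 : (∑ i ∈ Finset.range 1, q.coeff i * x ^ i) = 0 := by simp [hcoeff0]
    rw [h0, add_zero]
    exact hhs
  -- identify the terms
  have heq : ∀ k : ℕ,
      ((Nat.factorial (k+1) : ℂ) * p.coeff (k+1)) * Complex.exp (((k : ℂ) + 1) * (lam : ℂ) * s)
        / ((Nat.factorial (k + 1) : ℕ) : ℂ) = q.coeff (k + 1) * x ^ (k + 1) := by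
    intro k
    have hfac : ((Nat.factorial (k + 1) : ℕ) : ℂ) ≠ 0 :=
      Nat.cast_ne_zero.2 (Nat.factorial_ne_zero (k + 1))
    have hexp : Complex.exp (((k : ℂ) + 1) * (lam : ℂ) * s) = x ^ (k + 1) := by
      rw [hxdef, ← Complex.exp_nat_mul]
      congr 1
      push_cast
      ring
    rw [hexp, hpq]
    field_simp
  constructor
  · refine Summable.congr ?_ (fun k => (congrArg norm (heq k)).symm)
    have h1 : Summable (fun n => ‖q.coeff n * x ^ n‖) :=
      hsum_norm.congr (fun n => by rw [happ n])
    exact (summable_nat_add_iff 1).2 h1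
  · have htsum : (∑' k : ℕ, ((Nat.factorial (k+1) : ℂ) * p.coeff (k+1))
        * Complex.exp (((k : ℂ) + 1) * (lam : ℂ) * s) / ((Nat.factorial (k + 1) : ℕ) : ℂ))
        = g x := by
      rw [tsum_congr heq]
      exact hshift.tsum_eq
    rw [htsum]
    refine (hglim x hx).congr ?_
    intro n
    exact (qnest_eq_Gnest lam s 1 n).symm
end
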